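/- arXiv:2506.00465 — 2 statements merged into one kernel-verified Lean document; each statement's English description precedes it below -/
import Mathlib

section
/- Suppose φ is 1-coercive and f : X → ℝ ∪ {±∞} is proper, lsc on X, and φ-prox-bounded with threshold λ_f. Then for every λ ∈ (0, λ_f): (i) env_λ f(y) ∈ ℝ and prox_{λf}(y) ≠ ∅ for every y ∈ Y, i.e. dom env_λ f = dom prox_{λf} = Y; (ii) env_λ f : Y → ℝ is continuous; (iii) prox_{λf} : Y ⇉ X is compact-valued and usc; in particular it is locally bounded and osc, and its graph is closed in Y × ℝⁿ. -/
open Filter Topology Bornology Set RealInnerProductSpace Classical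

noncomputable section

namespace BregmanPaper

/-- Euclidean space `ℝⁿ`. -/
abbrev Eucl (n : ℕ) := EuclideanSpace ℝ (Fin n)

variable {n : ℕ}

/-! ### Set-valued operators between subsets of `ℝⁿ` -/

/-- `T : X ⇉ Y` is locally bounded at `x` (relative to `X`): some neighborhood `N` of `x`
in `X` has bounded image `T(N)`. -/
def LocBddAt (X : Set (Eucl n)) (T : Eucl n → Set (Eucl n)) (x : Eucl n) : Prop :=
  ∃ N : Set (Eucl n), N ⊆ X ∧ N ∈ 𝓝[X] x ∧ IsBounded (⋃ x' ∈ N, T x')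

/-- `T : X ⇉ Y` is upper semicontinuous at `x`: for every open `V ⊇ T(x)` there is a
neighborhood `N` of `x` in `X` with `T(N) ⊆ V`. -/
def UscAt (X : Set (Eucl n)) (T : Eucl n → Set (Eucl n)) (x : Eucl n) : Prop :=
  ∀ V : Set (Eucl n), IsOpen V → T x ⊆ V →
    ∃ N : Set (Eucl n), N ⊆ X ∧ N ∈ 𝓝[X] x ∧ (⋃ x' ∈ N, T x') ⊆ V

/-- `T : X ⇉ Y` is outer semicontinuous at `x`: every `y ∈ Y` which is the limit of a
sequence `yᵏ ∈ T(xᵏ)` with `X ∋ xᵏ → x` belongs to `T(x)`. -/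
def OscAt (X Y : Set (Eucl n)) (T : Eucl n → Set (Eucl n)) (x : Eucl n) : Prop :=
  ∀ y ∈ Y, ∀ u v : ℕ → Eucl n, (∀ k, u k ∈ X) → (∀ k, v k ∈ T (u k)) →
    Tendsto u atTop (𝓝 x) → Tendsto v atTop (𝓝 y) → y ∈ T x

/-- (effective) domain of a set-valued operator on `X`. -/
def svDom (X : Set (Eucl n)) (T : Eucl n → Set (Eucl n)) : Set (Eucl n) :=
  {x ∈ X | (T x).Nonempty}

/-- graph of a set-valued operator on `X`. -/
def svGraph (X : Set (Eucl n)) (T : Eucl n → Set (Eucl n)) : Set (Eucl n × Eucl n) :=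
  {p | p.1 ∈ X ∧ p.2 ∈ T p.1}

/-! ### Extended-real-valued functions on subsets of `ℝⁿ` -/

/-- Canonical extension of `f : X → ℝ̄`, set to `∞` outside `X`. -/
def cExt (X : Set (Eucl n)) (f : Eucl n → EReal) : Eucl n → EReal :=
  fun x => if x ∈ X then f x else ⊤

/-- `f : X → ℝ̄` is proper: not identically `∞` and nowhere `-∞` (on `X`). -/
def ProperOn (X : Set (Eucl n)) (f : Eucl n → EReal) : Prop :=
  (∃ x ∈ X, f x ≠ ⊤) ∧ ∀ x ∈ X, f x ≠ ⊥

/-- Convexity of an extended-real-valued function on a set. -/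
def ConvexOnE (S : Set (Eucl n)) (f : Eucl n → EReal) : Prop :=
  ∀ x ∈ S, ∀ y ∈ S, ∀ a b : ℝ, 0 ≤ a → 0 ≤ b → a + b = 1 →
    f (a • x + b • y) ≤ (a : EReal) * f x + (b : EReal) * f y

/-- Strict convexity of an extended-real-valued function on a set. -/
def StrictConvexOnE (S : Set (Eucl n)) (f : Eucl n → EReal) : Prop :=
  ∀ x ∈ S, ∀ y ∈ S, x ≠ y → ∀ a b : ℝ, 0 < a → 0 < b → a + b = 1 →
    f (a • x + b • y) < (a : EReal) * f x + (b : EReal) * f y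

/-- Lower semicontinuous hull of `f` relative to `X`: `cl f (x) = liminf_{X ∋ x' → x} f x'`. -/
def lscHullOn (X : Set (Eucl n)) (f : Eucl n → EReal) : Eucl n → EReal :=
  fun x => Filter.liminf f (𝓝[X] x)

/-- Convex hull of `f` relative to `X`: pointwise supremum of all convex minorants on `X`. -/
def convHullOn (X : Set (Eucl n)) (f : Eucl n → EReal) : Eucl n → EReal :=
  fun x => sSup {v : EReal | ∃ g : Eucl n → EReal,
    ConvexOnE X g ∧ (∀ y ∈ X, g y ≤ f y) ∧ v = g x}

/-- Closed convex hull of `f` relative to `X`: pointwise supremum of all convex minorants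
on `X` that are additionally lsc on `X`. -/
def cconvHullOn (X : Set (Eucl n)) (f : Eucl n → EReal) : Eucl n → EReal :=
  fun x => sSup {v : EReal | ∃ g : Eucl n → EReal,
    ConvexOnE X g ∧ LowerSemicontinuousOn g X ∧ (∀ y ∈ X, g y ≤ f y) ∧ v = g x}

/-- Fenchel conjugate of `h : ℝⁿ → ℝ̄`. -/
def fconj (h : Eucl n → EReal) : Eucl n → EReal :=
  fun y => ⨆ x : Eucl n, ((⟪x, y⟫ : ℝ) : EReal) - h x

/-- Fenchel subdifferential of `f` at `x`, relative to the set `X`. -/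
def fsubdiff (X : Set (Eucl n)) (f : Eucl n → EReal) (x : Eucl n) : Set (Eucl n) :=
  {u : Eucl n | ∀ x' ∈ X, f x + ((⟪u, x' - x⟫ : ℝ) : EReal) ≤ f x'}

/-- Set of minimizers of `h` over `S`. -/
def argminOn (S : Set (Eucl n)) (h : Eucl n → EReal) : Set (Eucl n) :=
  {x ∈ S | ∀ x' ∈ S, h x ≤ h x'}

/-- `h` is 1-coercive: `h(x)/‖x‖ → ∞` as `‖x‖ → ∞`. -/
def OneCoercive (h : Eucl n → EReal) : Prop :=
  ∀ M : ℝ, ∃ R : ℝ, ∀ x : Eucl n, R ≤ ‖x‖ → ((M * ‖x‖ : ℝ) : EReal) ≤ h x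

/-- `h` is coercive: `h(x) → ∞` as `‖x‖ → ∞`. -/
def CoerciveE (h : Eucl n → EReal) : Prop :=
  ∀ M : ℝ, ∃ R : ℝ, ∀ x : Eucl n, R ≤ ‖x‖ → ((M : ℝ) : EReal) ≤ h x

/-! ### Distance generating functions and Bregman objects -/

/-- Effective domain of an `EReal`-valued function. -/
def edom (φ : Eucl n → EReal) : Set (Eucl n) := {x | φ x ≠ ⊤}

/-- `φ` is a distance generating function with gradient `φ'` on the interior of its domain:
proper, lsc, convex, and differentiable on `int dom φ ≠ ∅`. -/
structure IsDGF (φ : Eucl n → EReal) (φ' : Eucl n → Eucl n) : Prop where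
  nonempty_dom : ∃ x, φ x ≠ ⊤
  ne_bot : ∀ x, φ x ≠ ⊥
  lsc : LowerSemicontinuous φ
  convex : ConvexOnE Set.univ φ
  int_nonempty : (interior (edom φ)).Nonempty
  diff : ∀ x ∈ interior (edom φ), HasGradientAt (fun z => (φ z).toReal) (φ' x) x

/-- Essential smoothness of `φ` (with gradient `φ'`). -/
def EssSmooth (φ : Eucl n → EReal) (φ' : Eucl n → Eucl n) : Prop :=
  (interior (edom φ)).Nonempty ∧
  (∀ x ∈ interior (edom φ), HasGradientAt (fun z => (φ z).toReal) (φ' x) x) ∧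
  ∀ (u : ℕ → Eucl n) (x : Eucl n), (∀ k, u k ∈ interior (edom φ)) →
    x ∈ frontier (edom φ) → Tendsto u atTop (𝓝 x) →
    Tendsto (fun k => ‖φ' (u k)‖) atTop atTop

/-- `φ` is Legendre: essentially smooth and essentially strictly convex. -/
def Legendre (φ : Eucl n → EReal) (φ' : Eucl n → Eucl n) : Prop :=
  EssSmooth φ φ' ∧
  ∀ S : Set (Eucl n), S ⊆ {x | (fsubdiff Set.univ φ x).Nonempty} → Convex ℝ S →
    StrictConvexOnE S φ

/-- Bregman distance induced by `φ` (with gradient `φ'`). -/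
def breg (φ : Eucl n → EReal) (φ' : Eucl n → Eucl n) (x y : Eucl n) : EReal :=
  if y ∈ interior (edom φ) then φ x - φ y - ((⟪φ' y, x - y⟫ : ℝ) : EReal) else ⊤

/-- Left Bregman–Moreau envelope `env_λ f`. -/
def benv (φ : Eucl n → EReal) (φ' : Eucl n → Eucl n) (lam : ℝ) (f : Eucl n → EReal)
    (y : Eucl n) : EReal :=
  ⨅ x ∈ edom φ, (f x + ((lam⁻¹ : ℝ) : EReal) * breg φ φ' x y)

/-- Left Bregman proximal mapping `prox_{λ f}`. -/
def bprox (φ : Eucl n → EReal) (φ' : Eucl n → Eucl n) (lam : ℝ) (f : Eucl n → EReal)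
    (y : Eucl n) : Set (Eucl n) :=
  argminOn (edom φ) (fun x => f x + ((lam⁻¹ : ℝ) : EReal) * breg φ φ' x y)

/-- Right Bregman–Moreau envelope `env*_λ g`. -/
def benvR (φ : Eucl n → EReal) (φ' : Eucl n → Eucl n) (lam : ℝ) (g : Eucl n → EReal)
    (x : Eucl n) : EReal :=
  ⨅ y ∈ interior (edom φ), (g y + ((lam⁻¹ : ℝ) : EReal) * breg φ φ' x y)

/-- Right Bregman proximal mapping `prox*_{λ g}`. -/
def bproxR (φ : Eucl n → EReal) (φ' : Eucl n → Eucl n) (lam : ℝ) (g : Eucl n → EReal)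
    (x : Eucl n) : Set (Eucl n) :=
  argminOn (interior (edom φ)) (fun y => g y + ((lam⁻¹ : ℝ) : EReal) * breg φ φ' x y)

/-- Left Bregman proximal hull `hull_λ f = −env*_λ(−env_λ f)`. -/
def bhull (φ : Eucl n → EReal) (φ' : Eucl n → Eucl n) (lam : ℝ) (f : Eucl n → EReal) :
    Eucl n → EReal :=
  fun x => - benvR φ φ' lam (fun y => - benv φ φ' lam f y) x

/-- Right Bregman proximal hull `hull*_λ g = −env_λ(−env*_λ g)`. -/
def bhullR (φ : Eucl n → EReal) (φ' : Eucl n → Eucl n) (lam : ℝ) (g : Eucl n → EReal) :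
    Eucl n → EReal :=
  fun y => - benv φ φ' lam (fun x => - benvR φ φ' lam g x) y

/-- `f` is `φ`-prox-bounded for the parameter `lam`. -/
def ProxBddBelow (φ : Eucl n → EReal) (φ' : Eucl n → Eucl n) (lam : ℝ)
    (f : Eucl n → EReal) : Prop :=
  ∃ y ∈ interior (edom φ), benv φ φ' lam f y ≠ ⊥

/-- `g` is right `φ`-prox-bounded for the parameter `lam`. -/
def ProxBddBelowR (φ : Eucl n → EReal) (φ' : Eucl n → Eucl n) (lam : ℝ)
    (g : Eucl n → EReal) : Prop :=
  ∃ x ∈ edom φ, benvR φ φ' lam g x ≠ ⊥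

/-- The (left) `φ`-prox-boundedness threshold `λ_f` of `f` (in `[0,∞]`). -/
def pbThreshold (φ : Eucl n → EReal) (φ' : Eucl n → Eucl n) (f : Eucl n → EReal) :
    ENNReal :=
  ⨆ l ∈ {l : ℝ | 0 < l ∧ ProxBddBelow φ φ' l f}, ENNReal.ofReal l

/-- The right `φ`-prox-boundedness threshold `λ̄_g` of `g` (in `[0,∞]`). -/
def pbThresholdR (φ : Eucl n → EReal) (φ' : Eucl n → Eucl n) (g : Eucl n → EReal) :
    ENNReal :=
  ⨆ l ∈ {l : ℝ | 0 < l ∧ ProxBddBelowR φ φ' l g}, ENNReal.ofReal l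

/-- Epi-composition `(∇φ ▷ g)(ξ) = inf {g(y) : y ∈ Y, ∇φ(y) = ξ}`. -/
def epicomp (φ' : Eucl n → Eucl n) (Y : Set (Eucl n)) (g : Eucl n → EReal) :
    Eucl n → EReal :=
  fun ξ => ⨅ y ∈ {y ∈ Y | φ' y = ξ}, g y

/-- Indicator function (in the `EReal` sense) of a set. -/
def indicatorE (S : Set (Eucl n)) : Eucl n → EReal := fun x => if x ∈ S then 0 else ⊤

/-! ### Euclidean proximal objects -/

/-- Euclidean Moreau envelope. -/
def eEnv (lam : ℝ) (h : Eucl n → EReal) (v : Eucl n) : EReal :=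
  ⨅ x : Eucl n, (h x + (((2 * lam)⁻¹ * ‖x - v‖ ^ 2 : ℝ) : EReal))

/-- Euclidean proximal mapping. -/
def eProx (lam : ℝ) (h : Eucl n → EReal) (v : Eucl n) : Set (Eucl n) :=
  argminOn Set.univ (fun x => h x + (((2 * lam)⁻¹ * ‖x - v‖ ^ 2 : ℝ) : EReal))

/-- Euclidean proximal hull. -/
def eHull (lam : ℝ) (h : Eucl n → EReal) : Eucl n → EReal :=
  fun v => - eEnv lam (fun w => - eEnv lam h w) v

/-! ### Auxiliary development -/

/-- real value of `φ`. -/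
def pR (φ : Eucl n → EReal) (x : Eucl n) : ℝ := (φ x).toReal

/-- real Bregman distance. -/
def DrR (φ : Eucl n → EReal) (φ' : Eucl n → Eucl n) (x y : Eucl n) : ℝ :=
  pR φ x - pR φ y - ⟪φ' y, x - y⟫

lemma phi_eq_coe {φ : Eucl n → EReal} {φ' : Eucl n → Eucl n} (hφ : IsDGF φ φ')
    {x : Eucl n} (hx : x ∈ edom φ) : φ x = ((pR φ x : ℝ) : EReal) :=
  (EReal.coe_toReal hx (hφ.ne_bot x)).symm

lemma psi_contAt {φ : Eucl n → EReal} {φ' : Eucl n → Eucl n} (hφ : IsDGF φ φ')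
    {y : Eucl n} (hy : y ∈ interior (edom φ)) : ContinuousAt (pR φ) y :=
  (hφ.diff y hy).hasFDerivAt.continuousAt

lemma dirDeriv {φ : Eucl n → EReal} {φ' : Eucl n → Eucl n} (hφ : IsDGF φ φ')
    {z : Eucl n} (hz : z ∈ interior (edom φ)) (v : Eucl n) :
    Tendsto (fun t : ℝ => (pR φ (z + t • v) - pR φ z) / t) (𝓝[>] (0:ℝ))
      (𝓝 ⟪φ' z, v⟫) := by
  have hline : HasDerivAt (fun t : ℝ => z + t • v) v 0 := by
    simpa using ((hasDerivAt_id (0:ℝ)).smul_const v).const_add z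
  have hgrad := (hφ.diff z hz).hasFDerivAt
  have hz0 : z + (0:ℝ) • v = z := by simp
  rw [← hz0] at hgrad
  have hcomp := hgrad.comp_hasDerivAt 0 hline
  rw [hz0] at hcomp
  rw [InnerProductSpace.toDual_apply_apply] at hcomp
  have := (hasDerivAt_iff_tendsto_slope.1 hcomp).mono_left
    (nhdsWithin_mono 0 (fun t (ht : t ∈ Ioi (0:ℝ)) => ne_of_gt ht))
  refine this.congr (fun t => ?_)
  simp [slope_def_field, pR]

lemma grad_ineq {φ : Eucl n → EReal} {φ' : Eucl n → Eucl n} (hφ : IsDGF φ φ')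
    {z : Eucl n} (hz : z ∈ interior (edom φ)) (x : Eucl n) :
    ((pR φ z + ⟪φ' z, x - z⟫ : ℝ) : EReal) ≤ φ x := by
  rcases eq_or_ne (φ x) ⊤ with hx | hx
  · rw [hx]; exact le_top
  have hzX : z ∈ edom φ := interior_subset hz
  have hpz := phi_eq_coe hφ hzX
  have hpx := phi_eq_coe hφ hx
  have key : ⟪φ' z, x - z⟫ ≤ pR φ x - pR φ z := by
    have hslope : ∀ t ∈ Ioc (0:ℝ) 1,
        (pR φ (z + t • (x - z)) - pR φ z) / t ≤ pR φ x - pR φ z := by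
      intro t ht
      have hconv := hφ.convex z (mem_univ z) x (mem_univ x) (1 - t) t
        (by linarith [ht.2]) (le_of_lt ht.1) (by ring)
      have hpt : (1 - t) • z + t • x = z + t • (x - z) := by
        rw [smul_sub]; module
      rw [hpt, hpz, hpx, ← EReal.coe_mul, ← EReal.coe_mul, ← EReal.coe_add] at hconv
      have hne_top : φ (z + t • (x - z)) ≠ ⊤ :=
        fun h => by rw [h] at hconv; exact absurd (top_le_iff.1 hconv) (EReal.coe_ne_top _)
      rw [phi_eq_coe hφ hne_top, EReal.coe_le_coe_iff] at hconv
      rw [div_le_iff₀ ht.1]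
      nlinarith
    have hev : ∀ᶠ t in 𝓝[>] (0:ℝ),
        (pR φ (z + t • (x - z)) - pR φ z) / t ≤ pR φ x - pR φ z :=
      Filter.eventually_iff_exists_mem.2 ⟨Ioc 0 1,
        Ioc_mem_nhdsGT_of_mem ⟨le_refl _, one_pos⟩, hslope⟩
    exact le_of_tendsto (dirDeriv hφ hz (x - z)) hev
  rw [hpx, EReal.coe_le_coe_iff]
  linarith
lemma loc_bdd {φ : Eucl n → EReal} {φ' : Eucl n → Eucl n} (hφ : IsDGF φ φ')
    {y : Eucl n} (hy : y ∈ interior (edom φ)) :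
    ∃ r > 0, ∃ C : ℝ, Metric.ball y r ⊆ interior (edom φ) ∧
      ∀ y' ∈ Metric.ball y r, ‖φ' y'‖ ≤ C ∧ |pR φ y'| ≤ C := by
  obtain ⟨ε, hε, hball⟩ := Metric.isOpen_iff.1 isOpen_interior y hy
  set r := ε / 4 with hr
  have hr0 : 0 < r := by positivity
  have hcb : Metric.closedBall y (3 * r) ⊆ interior (edom φ) := by
    intro z hz
    rw [Metric.mem_closedBall] at hz
    exact hball (by rw [Metric.mem_ball]; linarith)
  have hcont : ContinuousOn (pR φ) (Metric.closedBall y (3 * r)) :=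
    fun z hz => (psi_contAt hφ (hcb hz)).continuousWithinAt
  obtain ⟨C₁, hC₁⟩ := (isCompact_closedBall y (3 * r)).exists_bound_of_continuousOn hcont
  have hC₁0 : 0 ≤ C₁ := le_trans (norm_nonneg _)
    (hC₁ y (Metric.mem_closedBall_self (by positivity)))
  refine ⟨r, hr0, max C₁ (2 * C₁ / r), fun z hz =>
    hcb (Metric.ball_subset_closedBall (Metric.ball_subset_ball (by linarith) hz)),
    fun y' hy' => ?_⟩
  have hy'cb : y' ∈ Metric.closedBall y (3 * r) :=
    Metric.ball_subset_closedBall (Metric.ball_subset_ball (by linarith) hy')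
  have hy'Y : y' ∈ interior (edom φ) := hcb hy'cb
  constructor
  · rcases eq_or_ne (φ' y') 0 with h0 | h0
    · rw [h0, norm_zero]; exact le_max_of_le_right (by positivity)
    set g := φ' y' with hg
    set u := (r / ‖g‖) • g with hu
    have hgn : 0 < ‖g‖ := norm_pos_iff.2 h0
    have hun : ‖u‖ = r := by
      rw [hu, norm_smul, Real.norm_eq_abs, abs_of_pos (by positivity),
        div_mul_cancel₀ _ (ne_of_gt hgn)]
    have hxcb : y' + u ∈ Metric.closedBall y (3 * r) := by
      rw [Metric.mem_closedBall]
      have h1 : dist (y' + u) y' = r := by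
        rw [dist_eq_norm, add_sub_cancel_left, hun]
      have h2 : dist y' y < r := Metric.mem_ball.1 hy'
      calc dist (y' + u) y ≤ dist (y' + u) y' + dist y' y := dist_triangle _ _ _
        _ ≤ 3 * r := by rw [h1]; linarith
    have hsub := grad_ineq hφ hy'Y (y' + u)
    rw [phi_eq_coe hφ (interior_subset (hcb hxcb)), EReal.coe_le_coe_iff,
      add_sub_cancel_left] at hsub
    have hinner : ⟪g, u⟫ = r * ‖g‖ := by
      rw [hu, real_inner_smul_right, real_inner_self_eq_norm_mul_norm]
      field_simp
    have hb1 : |pR φ (y' + u)| ≤ C₁ := by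
      rw [← Real.norm_eq_abs]; exact hC₁ _ hxcb
    have hb2 : |pR φ y'| ≤ C₁ := by
      rw [← Real.norm_eq_abs]; exact hC₁ _ hy'cb
    have : r * ‖g‖ ≤ 2 * C₁ := by
      rw [← hinner]
      have := abs_le.1 hb1
      have := abs_le.1 hb2
      linarith
    refine le_max_of_le_right ?_
    rw [le_div_iff₀ hr0]
    linarith
  · exact le_max_of_le_left (by rw [← Real.norm_eq_abs]; exact hC₁ y' hy'cb)

lemma grad_contAt {φ : Eucl n → EReal} {φ' : Eucl n → Eucl n} (hφ : IsDGF φ φ')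
    {w : Eucl n} (hy : w ∈ interior (edom φ)) : ContinuousAt φ' w := by
  by_contra hcont
  rw [Metric.continuousAt_iff] at hcont
  push_neg at hcont
  obtain ⟨ε, hε, hdlt⟩ := hcont
  obtain ⟨r, hr0, C, hballY, hbd⟩ := loc_bdd hφ hy
  have hsel : ∀ k : ℕ, ∃ y', dist y' w < min r (1 / (k + 1)) ∧
      ε ≤ dist (φ' y') (φ' w) := fun k => hdlt _ (lt_min hr0 (by positivity))
  choose y hy1 hy2 using hsel
  have hyball : ∀ k, y k ∈ Metric.ball w r :=
    fun k => Metric.mem_ball.2 (lt_of_lt_of_le (hy1 k) (min_le_left _ _))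
  have hyY : ∀ k, y k ∈ interior (edom φ) := fun k => hballY (hyball k)
  have hyt : Tendsto y atTop (𝓝 w) := by
    rw [tendsto_iff_dist_tendsto_zero]
    refine squeeze_zero (fun k => dist_nonneg) (fun k => le_of_lt
      (lt_of_lt_of_le (hy1 k) (min_le_right _ _))) tendsto_one_div_add_atTop_nhds_zero_nat
  obtain ⟨g, -, σ, hσ, hgt⟩ := tendsto_subseq_of_bounded
    (Metric.isBounded_closedBall (x := (0 : Eucl n)) (r := C))
    (fun k => mem_closedBall_zero_iff.2 ((hbd (y k) (hyball k)).1))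
  have hεg : ε ≤ dist g (φ' w) := by
    refine ge_of_tendsto (Tendsto.dist hgt tendsto_const_nhds) ?_
    exact Filter.Eventually.of_forall (fun k => hy2 (σ k))
  have hyσt : Tendsto (y ∘ σ) atTop (𝓝 w) := hyt.comp hσ.tendsto_atTop
  -- g is a subgradient at w
  have hsubg : ∀ x ∈ interior (edom φ), pR φ w + ⟪g, x - w⟫ ≤ pR φ x := by
    intro x hx
    have hterm : ∀ k, pR φ (y (σ k)) + ⟪φ' (y (σ k)), x - y (σ k)⟫ ≤ pR φ x := by
      intro k
      have := grad_ineq hφ (hyY (σ k)) x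
      rw [phi_eq_coe hφ (interior_subset hx), EReal.coe_le_coe_iff] at this
      exact this
    have hlim : Tendsto (fun k => pR φ (y (σ k)) + ⟪φ' (y (σ k)), x - y (σ k)⟫)
        atTop (𝓝 (pR φ w + ⟪g, x - w⟫)) := by
      refine Tendsto.add ((psi_contAt hφ hy).tendsto.comp hyσt) ?_
      exact Tendsto.inner hgt (tendsto_const_nhds.sub hyσt)
    exact le_of_tendsto hlim (Filter.Eventually.of_forall hterm)
  -- hence ⟪g, v⟫ ≤ ⟪φ' w, v⟫ for all v
  have hdir : ∀ v : Eucl n, ⟪g, v⟫ ≤ ⟪φ' w, v⟫ := by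
    intro v
    have hev : ∀ᶠ t in 𝓝[>] (0:ℝ), ⟪g, v⟫ ≤ (pR φ (w + t • v) - pR φ w) / t := by
      have hmem : Ioo (0:ℝ) (r / (‖v‖ + 1)) ∈ 𝓝[>] (0:ℝ) :=
        Ioo_mem_nhdsGT_of_mem ⟨le_refl _, by positivity⟩
      refine Filter.eventually_iff_exists_mem.2 ⟨_, hmem, fun t ht => ?_⟩
      have htY : w + t • v ∈ interior (edom φ) := by
        refine hballY (Metric.mem_ball.2 ?_)
        rw [dist_eq_norm, add_sub_cancel_left, norm_smul, Real.norm_eq_abs,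
          abs_of_pos ht.1]
        have hv1 : 0 < ‖v‖ + 1 := by positivity
        calc t * ‖v‖ ≤ t * (‖v‖ + 1) := by nlinarith [ht.1]
          _ < r / (‖v‖ + 1) * (‖v‖ + 1) := by nlinarith [ht.2]
          _ = r := by field_simp
      have := hsubg _ htY
      rw [add_sub_cancel_left, real_inner_smul_right] at this
      rw [le_div_iff₀ ht.1]
      linarith
    exact ge_of_tendsto (dirDeriv hφ hy v) hev
  have hgeq : g = φ' w := by
    have h1 := hdir (g - φ' w)
    have h2 : ⟪g - φ' w, g - φ' w⟫ ≤ 0 := by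
      rw [inner_sub_left]; linarith
    have := real_inner_self_nonpos.1 h2
    rwa [sub_eq_zero] at this
  rw [hgeq, dist_self] at hεg
  linarith
/-- value of the objective function, real form. -/
def tval (φ : Eucl n → EReal) (φ' : Eucl n → Eucl n) (lam : ℝ) (f : Eucl n → EReal)
    (y x : Eucl n) : EReal :=
  f x + ((lam⁻¹ * DrR φ φ' x y : ℝ) : EReal)

lemma breg_coe {φ : Eucl n → EReal} {φ' : Eucl n → Eucl n} (hφ : IsDGF φ φ')
    {x y : Eucl n} (hx : x ∈ edom φ) (hy : y ∈ interior (edom φ)) :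
    breg φ φ' x y = ((DrR φ φ' x y : ℝ) : EReal) := by
  rw [breg, if_pos hy, phi_eq_coe hφ hx, phi_eq_coe hφ (interior_subset hy), DrR,
    EReal.coe_sub, EReal.coe_sub]

lemma benv_eq {φ : Eucl n → EReal} {φ' : Eucl n → Eucl n} (hφ : IsDGF φ φ')
    (lam : ℝ) (f : Eucl n → EReal) {y : Eucl n} (hy : y ∈ interior (edom φ)) :
    benv φ φ' lam f y = ⨅ x ∈ edom φ, tval φ φ' lam f y x := by
  rw [benv]
  exact iInf_congr fun x => iInf_congr fun hx => by
    rw [breg_coe hφ hx hy, ← EReal.coe_mul, tval]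

lemma bprox_eq {φ : Eucl n → EReal} {φ' : Eucl n → Eucl n} (hφ : IsDGF φ φ')
    (lam : ℝ) (f : Eucl n → EReal) {y : Eucl n} (hy : y ∈ interior (edom φ)) :
    bprox φ φ' lam f y
      = {x ∈ edom φ | ∀ x' ∈ edom φ, tval φ φ' lam f y x ≤ tval φ φ' lam f y x'} := by
  rw [bprox, argminOn]
  ext x
  simp only [mem_setOf_eq]
  refine and_congr_right fun hx => ?_
  refine forall_congr' fun x' => ?_
  refine imp_congr_right fun hx' => ?_
  rw [show f x + ((lam⁻¹ : ℝ) : EReal) * breg φ φ' x y = tval φ φ' lam f y x from by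
      rw [breg_coe hφ hx hy, ← EReal.coe_mul, tval],
    show f x' + ((lam⁻¹ : ℝ) : EReal) * breg φ φ' x' y = tval φ φ' lam f y x' from by
      rw [breg_coe hφ hx' hy, ← EReal.coe_mul, tval]]

lemma exists_mu {φ : Eucl n → EReal} {φ' : Eucl n → Eucl n} {f : Eucl n → EReal}
    {lam : ℝ} (hthr : ENNReal.ofReal lam < pbThreshold φ φ' f) :
    ∃ μ : ℝ, lam < μ ∧ 0 < μ ∧ ProxBddBelow φ φ' μ f := by
  rw [pbThreshold, lt_iSup_iff] at hthr
  obtain ⟨μ, hμ⟩ := hthr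
  rw [lt_iSup_iff] at hμ
  obtain ⟨hμS, hlt⟩ := hμ
  exact ⟨μ, (ENNReal.ofReal_lt_ofReal_iff hμS.1).1 hlt, hμS.1, hμS.2⟩

lemma exists_beta {φ : Eucl n → EReal} {φ' : Eucl n → Eucl n} {f : Eucl n → EReal}
    (hφ : IsDGF φ φ') {μ : ℝ} (h : ProxBddBelow φ φ' μ f) :
    ∃ y₀ ∈ interior (edom φ), ∃ β : ℝ, ∀ x ∈ edom φ,
      (β : EReal) ≤ tval φ φ' μ f y₀ x := by
  obtain ⟨y₀, hy₀, hne⟩ := h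
  refine ⟨y₀, hy₀, ?_⟩
  have hform := benv_eq hφ μ f hy₀
  rcases eq_or_ne (benv φ φ' μ f y₀) ⊤ with htop | hnt
  · refine ⟨0, fun x hx => ?_⟩
    calc ((0:ℝ) : EReal) ≤ ⊤ := le_top
      _ = benv φ φ' μ f y₀ := htop.symm
      _ = ⨅ x ∈ edom φ, tval φ φ' μ f y₀ x := hform
      _ ≤ tval φ φ' μ f y₀ x := iInf₂_le x hx
  · refine ⟨(benv φ φ' μ f y₀).toReal, fun x hx => ?_⟩
    rw [EReal.coe_toReal hnt hne, hform]
    exact iInf₂_le x hx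
lemma fval_lb {φ : Eucl n → EReal} {φ' : Eucl n → Eucl n} {f : Eucl n → EReal}
    (hproper : ProperOn (edom φ) f) {μ : ℝ} {y₀ : Eucl n} {β : ℝ}
    (hβ : ∀ x ∈ edom φ, (β : EReal) ≤ tval φ φ' μ f y₀ x)
    {x : Eucl n} (hx : x ∈ edom φ) (hfx : f x ≠ ⊤) :
    β - μ⁻¹ * DrR φ φ' x y₀ ≤ (f x).toReal := by
  have h := hβ x hx
  rw [tval, ← EReal.coe_toReal hfx (hproper.2 x hx), ← EReal.coe_add,
    EReal.coe_le_coe_iff] at h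
  linarith

lemma coercive_bd {φ : Eucl n → EReal} {φ' : Eucl n → Eucl n} {f : Eucl n → EReal}
    (hφ : IsDGF φ φ') (hco : OneCoercive φ) (hproper : ProperOn (edom φ) f)
    {lam μ : ℝ} (hlam : 0 < lam) (hμl : lam < μ)
    {y₀ : Eucl n} (hy₀ : y₀ ∈ interior (edom φ)) {β : ℝ}
    (hβ : ∀ x ∈ edom φ, (β : EReal) ≤ tval φ φ' μ f y₀ x)
    {w : Eucl n} (hw : w ∈ interior (edom φ)) :
    ∃ δ > 0, Metric.ball w δ ⊆ interior (edom φ) ∧ ∃ A : ℝ,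
      ∀ y ∈ Metric.ball w δ, ∀ x ∈ edom φ,
        ((‖x‖ - A : ℝ) : EReal) ≤ tval φ φ' lam f y x := by
  have hμ0 : 0 < μ := lt_trans hlam hμl
  have hc : 0 < lam⁻¹ - μ⁻¹ := sub_pos.2 (inv_strictAnti₀ hlam hμl)
  obtain ⟨r, hr0, C, hballY, hbd⟩ := loc_bdd hφ hw
  have hC0 : 0 ≤ C := le_trans (norm_nonneg _) (hbd w (Metric.mem_ball_self hr0)).1
  obtain ⟨C0, hC0a, hC0b, hC0n⟩ : ∃ C0, ‖φ' y₀‖ ≤ C0 ∧ |pR φ y₀| ≤ C0 ∧ 0 ≤ C0 :=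
    ⟨max ‖φ' y₀‖ |pR φ y₀|, le_max_left _ _, le_max_right _ _,
      le_trans (norm_nonneg _) (le_max_left _ _)⟩
  obtain ⟨R, hR0, hR⟩ : ∃ R, 0 ≤ R ∧ ∀ x : Eucl n, R ≤ ‖x‖ →
      (((lam⁻¹ * C + μ⁻¹ * C0 + 1) / (lam⁻¹ - μ⁻¹) * ‖x‖ : ℝ) : EReal) ≤ φ x := by
    obtain ⟨R, hR⟩ := hco ((lam⁻¹ * C + μ⁻¹ * C0 + 1) / (lam⁻¹ - μ⁻¹))
    exact ⟨max R 0, le_max_right _ _, fun x hx => hR x (le_trans (le_max_left _ _) hx)⟩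
  refine ⟨r, hr0, hballY, max ((lam⁻¹ * (C + C * (‖w‖ + r)) + μ⁻¹ * (C0 + C0 * ‖y₀‖)) - β) (R - β + (lam⁻¹ * (C + C * (‖w‖ + r)) + μ⁻¹ * (C0 + C0 * ‖y₀‖)) - ((lam⁻¹ - μ⁻¹) * pR φ w - (lam⁻¹ - μ⁻¹) * (‖φ' w‖ * (R + ‖w‖)) - (lam⁻¹ * C * R + μ⁻¹ * C0 * R))),
    fun y hy x hx => ?_⟩
  rcases eq_or_ne (f x) ⊤ with hfx | hfx
  · rw [tval, hfx, EReal.top_add_coe]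
    exact le_top
  have ha := fval_lb hproper hβ hx hfx
  rw [tval, ← EReal.coe_toReal hfx (hproper.2 x hx), ← EReal.coe_add, EReal.coe_le_coe_iff]
  have hd1 : lam⁻¹ * DrR φ φ' x y
      = lam⁻¹ * pR φ x - lam⁻¹ * (pR φ y + ⟪φ' y, x - y⟫) := by
    simp only [DrR]; ring
  have hd2 : μ⁻¹ * DrR φ φ' x y₀
      = μ⁻¹ * pR φ x - μ⁻¹ * (pR φ y₀ + ⟪φ' y₀, x - y₀⟫) := by
    simp only [DrR]; ring
  have hyn : ‖y‖ ≤ ‖w‖ + r := by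
    have h1 := norm_sub_norm_le y w
    have h2 : ‖y - w‖ < r := by rw [← dist_eq_norm]; exact Metric.mem_ball.1 hy
    linarith
  have hiy : |⟪φ' y, x - y⟫| ≤ C * (‖x‖ + (‖w‖ + r)) := by
    refine le_trans (abs_real_inner_le_norm _ _) ?_
    exact mul_le_mul (hbd y hy).1 (le_trans (norm_sub_le x y) (by linarith))
      (norm_nonneg _) hC0
  have hiy0 : |⟪φ' y₀, x - y₀⟫| ≤ C0 * (‖x‖ + ‖y₀‖) := by
    refine le_trans (abs_real_inner_le_norm _ _) ?_
    exact mul_le_mul hC0a (norm_sub_le x y₀) (norm_nonneg _) hC0n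
  have hpy := abs_le.1 (hbd y hy).2
  have hp1 : lam⁻¹ * (pR φ y + ⟪φ' y, x - y⟫)
      ≤ lam⁻¹ * (C + C * (‖x‖ + (‖w‖ + r))) := by
    refine mul_le_mul_of_nonneg_left ?_ (inv_nonneg.2 hlam.le)
    have h7 := le_of_abs_le hiy
    linarith
  have hp2 : μ⁻¹ * (-(C0 + C0 * (‖x‖ + ‖y₀‖)))
      ≤ μ⁻¹ * (pR φ y₀ + ⟪φ' y₀, x - y₀⟫) := by
    refine mul_le_mul_of_nonneg_left ?_ (inv_nonneg.2 hμ0.le)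
    have h8 := neg_le_of_abs_le hiy0
    have h9 := abs_le.1 hC0b
    linarith
  rcases le_or_gt R ‖x‖ with hbig | hsmall
  · have hs := hR x hbig
    rw [phi_eq_coe hφ hx, EReal.coe_le_coe_iff] at hs
    have hs2 : (lam⁻¹ * C + μ⁻¹ * C0 + 1) * ‖x‖ ≤ (lam⁻¹ - μ⁻¹) * pR φ x := by
      have h4 := mul_le_mul_of_nonneg_left hs hc.le
      have h5 : (lam⁻¹ - μ⁻¹) * ((lam⁻¹ * C + μ⁻¹ * C0 + 1) / (lam⁻¹ - μ⁻¹) * ‖x‖)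
          = (lam⁻¹ * C + μ⁻¹ * C0 + 1) * ‖x‖ := by
        rw [← mul_assoc, mul_comm (lam⁻¹ - μ⁻¹) _, div_mul_cancel₀ _ hc.ne']
      linarith
    have hA := le_max_left ((lam⁻¹ * (C + C * (‖w‖ + r)) + μ⁻¹ * (C0 + C0 * ‖y₀‖)) - β) (R - β + (lam⁻¹ * (C + C * (‖w‖ + r)) + μ⁻¹ * (C0 + C0 * ‖y₀‖)) - ((lam⁻¹ - μ⁻¹) * pR φ w - (lam⁻¹ - μ⁻¹) * (‖φ' w‖ * (R + ‖w‖)) - (lam⁻¹ * C * R + μ⁻¹ * C0 * R)))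
    linarith [ha, hd1, hd2, hp1, hp2, hs2, hA]
  · have hgi := grad_ineq hφ hw x
    rw [phi_eq_coe hφ hx, EReal.coe_le_coe_iff] at hgi
    have cgi : (lam⁻¹ - μ⁻¹) * (pR φ w + ⟪φ' w, x - w⟫) ≤ (lam⁻¹ - μ⁻¹) * pR φ x :=
      mul_le_mul_of_nonneg_left hgi hc.le
    have hiw : |⟪φ' w, x - w⟫| ≤ ‖φ' w‖ * (‖x‖ + ‖w‖) :=
      le_trans (abs_real_inner_le_norm _ _)
        (mul_le_mul_of_nonneg_left (norm_sub_le x w) (norm_nonneg _))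
    have hsc : (lam⁻¹ - μ⁻¹) * (-(‖φ' w‖ * (‖x‖ + ‖w‖)))
        ≤ (lam⁻¹ - μ⁻¹) * ⟪φ' w, x - w⟫ :=
      mul_le_mul_of_nonneg_left (neg_le_of_abs_le hiw) hc.le
    have h6 : (lam⁻¹ - μ⁻¹) * (‖φ' w‖ * (‖x‖ + ‖w‖))
        ≤ (lam⁻¹ - μ⁻¹) * (‖φ' w‖ * (R + ‖w‖)) :=
      mul_le_mul_of_nonneg_left
        (mul_le_mul_of_nonneg_left (by linarith) (norm_nonneg _)) hc.le
    have h5a : lam⁻¹ * C * ‖x‖ ≤ lam⁻¹ * C * R :=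
      mul_le_mul_of_nonneg_left hsmall.le (mul_nonneg (inv_nonneg.2 hlam.le) hC0)
    have h5b : μ⁻¹ * C0 * ‖x‖ ≤ μ⁻¹ * C0 * R :=
      mul_le_mul_of_nonneg_left hsmall.le (mul_nonneg (inv_nonneg.2 hμ0.le) hC0n)
    have hA := le_max_right ((lam⁻¹ * (C + C * (‖w‖ + r)) + μ⁻¹ * (C0 + C0 * ‖y₀‖)) - β) (R - β + (lam⁻¹ * (C + C * (‖w‖ + r)) + μ⁻¹ * (C0 + C0 * ‖y₀‖)) - ((lam⁻¹ - μ⁻¹) * pR φ w - (lam⁻¹ - μ⁻¹) * (‖φ' w‖ * (R + ‖w‖)) - (lam⁻¹ * C * R + μ⁻¹ * C0 * R)))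
    linarith [ha, hd1, hd2, hp1, hp2, cgi, hsc, h6, h5a, h5b, hA, hsmall.le]
lemma seq_abs_bdd {u : ℕ → ℝ} {l : ℝ} (h : Tendsto u atTop (𝓝 l)) :
    ∃ M : ℝ, ∀ k, |u k| ≤ M := by
  obtain ⟨M1, hM1⟩ := h.bddAbove_range
  obtain ⟨M2, hM2⟩ := h.bddBelow_range
  refine ⟨max M1 (-M2), fun k => abs_le.2 ⟨?_, ?_⟩⟩
  · have h2 := hM2 (mem_range_self k)
    have h3 : -M2 ≤ max M1 (-M2) := le_max_right _ _
    linarith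
  · exact le_trans (hM1 (mem_range_self k)) (le_max_left _ _)

lemma upper_bd {φ : Eucl n → EReal} {φ' : Eucl n → Eucl n} {f : Eucl n → EReal}
    (hφ : IsDGF φ φ') (hproper : ProperOn (edom φ) f) (lam : ℝ)
    {w : Eucl n} (hw : w ∈ interior (edom φ)) :
    ∃ δ > 0, Metric.ball w δ ⊆ interior (edom φ) ∧ ∃ U : ℝ,
      ∀ y ∈ Metric.ball w δ, benv φ φ' lam f y ≤ (U : EReal) := by
  obtain ⟨x₀, hx₀, hfx₀⟩ := hproper.1
  obtain ⟨r, hr0, C, hballY, hbd⟩ := loc_bdd hφ hw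
  have hC0 : 0 ≤ C := le_trans (norm_nonneg _) (hbd w (Metric.mem_ball_self hr0)).1
  refine ⟨r, hr0, hballY,
    (f x₀).toReal + |lam⁻¹| * (|pR φ x₀| + C + C * (‖x₀‖ + (‖w‖ + r))), fun y hy => ?_⟩
  have hyY := hballY hy
  have hle : benv φ φ' lam f y ≤ tval φ φ' lam f y x₀ := by
    rw [benv_eq hφ lam f hyY]
    exact iInf₂_le x₀ hx₀
  refine le_trans hle ?_
  rw [tval, ← EReal.coe_toReal hfx₀ (hproper.2 x₀ hx₀), ← EReal.coe_add,
    EReal.coe_le_coe_iff, EReal.toReal_coe]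
  have hyn : ‖y‖ ≤ ‖w‖ + r := by
    have h1 := norm_sub_norm_le y w
    have h2 : ‖y - w‖ < r := by rw [← dist_eq_norm]; exact Metric.mem_ball.1 hy
    linarith
  have hiy : |⟪φ' y, x₀ - y⟫| ≤ C * (‖x₀‖ + (‖w‖ + r)) := by
    refine le_trans (abs_real_inner_le_norm _ _) ?_
    exact mul_le_mul (hbd y hy).1 (le_trans (norm_sub_le x₀ y) (by linarith))
      (norm_nonneg _) hC0
  have hpy := abs_le.1 (hbd y hy).2
  have h1 : |DrR φ φ' x₀ y| ≤ |pR φ x₀| + C + C * (‖x₀‖ + (‖w‖ + r)) := by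
    have h2 : DrR φ φ' x₀ y = pR φ x₀ - pR φ y - ⟪φ' y, x₀ - y⟫ := rfl
    rw [h2]
    have h3 := abs_le.1 hiy
    have h4 := le_abs_self (pR φ x₀)
    have h5 := neg_abs_le (pR φ x₀)
    rw [abs_le]
    constructor <;> linarith
  have h6 : lam⁻¹ * DrR φ φ' x₀ y
      ≤ |lam⁻¹| * (|pR φ x₀| + C + C * (‖x₀‖ + (‖w‖ + r))) := by
    refine le_trans (le_abs_self _) ?_
    rw [abs_mul]
    exact mul_le_mul_of_nonneg_left h1 (abs_nonneg _)
  linarith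

lemma benv_finite {φ : Eucl n → EReal} {φ' : Eucl n → Eucl n} {f : Eucl n → EReal}
    (hφ : IsDGF φ φ') (hco : OneCoercive φ) (hproper : ProperOn (edom φ) f)
    {lam μ : ℝ} (hlam : 0 < lam) (hμl : lam < μ)
    {y₀ : Eucl n} (hy₀ : y₀ ∈ interior (edom φ)) {β : ℝ}
    (hβ : ∀ x ∈ edom φ, (β : EReal) ≤ tval φ φ' μ f y₀ x)
    {y : Eucl n} (hy : y ∈ interior (edom φ)) :
    benv φ φ' lam f y ≠ ⊥ ∧ benv φ φ' lam f y ≠ ⊤ := by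
  obtain ⟨δ, hδ0, hsub, A, hA⟩ := coercive_bd hφ hco hproper hlam hμl hy₀ hβ hy
  obtain ⟨δ', hδ'0, hsub', U, hU⟩ := upper_bd hφ hproper lam hy
  have hlow : ((-A : ℝ) : EReal) ≤ benv φ φ' lam f y := by
    rw [benv_eq hφ lam f hy]
    refine le_iInf₂ fun x hx => le_trans ?_ (hA y (Metric.mem_ball_self hδ0) x hx)
    rw [EReal.coe_le_coe_iff]
    have := norm_nonneg x
    linarith
  have hup := hU y (Metric.mem_ball_self hδ'0)
  constructor
  · intro h
    rw [h, le_bot_iff] at hlow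
    exact EReal.coe_ne_bot _ hlow
  · intro h
    rw [h, top_le_iff] at hup
    exact EReal.coe_ne_top U hup
lemma keyLimit {φ : Eucl n → EReal} {φ' : Eucl n → Eucl n} {f : Eucl n → EReal}
    (hφ : IsDGF φ φ') (hproper : ProperOn (edom φ) f)
    (hlsc : LowerSemicontinuousOn f (edom φ))
    {lam μ : ℝ} (hlam : 0 < lam) (hμl : lam < μ)
    {y₀ : Eucl n} (hy₀ : y₀ ∈ interior (edom φ)) {β : ℝ}
    (hβ : ∀ x ∈ edom φ, (β : EReal) ≤ tval φ φ' μ f y₀ x)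
    {w : Eucl n} (hw : w ∈ interior (edom φ)) {y x : ℕ → Eucl n} {xb : Eucl n}
    (hxX : ∀ k, x k ∈ edom φ)
    (hyt : Tendsto y atTop (𝓝 w)) (hxt : Tendsto x atTop (𝓝 xb))
    {L : ℝ} (hL : ∀ᶠ k in atTop, tval φ φ' lam f (y k) (x k) ≤ (L : EReal)) :
    xb ∈ edom φ ∧ tval φ φ' lam f w xb ≤ (L : EReal) := by
  have hμ0 : 0 < μ := lt_trans hlam hμl
  have hc : 0 < lam⁻¹ - μ⁻¹ := sub_pos.2 (inv_strictAnti₀ hlam hμl)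
  -- shift to make the bound hold for all k
  obtain ⟨N, hN⟩ := eventually_atTop.1 hL
  set Y' : ℕ → Eucl n := fun k => y (k + N) with hY'
  set X' : ℕ → Eucl n := fun k => x (k + N) with hX'
  have hX'X : ∀ k, X' k ∈ edom φ := fun k => hxX (k + N)
  have hY't : Tendsto Y' atTop (𝓝 w) := (tendsto_add_atTop_iff_nat N).2 hyt
  have hX't : Tendsto X' atTop (𝓝 xb) := (tendsto_add_atTop_iff_nat N).2 hxt
  have hL' : ∀ k, tval φ φ' lam f (Y' k) (X' k) ≤ (L : EReal) :=
    fun k => hN (k + N) (Nat.le_add_left N k)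
  clear hL hN hyt hxt
  -- real-valued data
  have hfk : ∀ k, f (X' k) ≠ ⊤ := by
    intro k h
    have h2 := hL' k
    rw [tval, h, EReal.top_add_coe] at h2
    exact (not_le.2 (EReal.coe_lt_top L)) h2
  set a : ℕ → ℝ := fun k => (f (X' k)).toReal with ha
  set s : ℕ → ℝ := fun k => pR φ (X' k) with hs
  set bk : ℕ → ℝ := fun k => pR φ (Y' k) + ⟪φ' (Y' k), X' k - Y' k⟫ with hbk
  set b0 : ℕ → ℝ := fun k => pR φ y₀ + ⟪φ' y₀, X' k - y₀⟫ with hb0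
  have hDr1 : ∀ k, DrR φ φ' (X' k) (Y' k) = s k - bk k := by
    intro k; simp only [DrR, hs, hbk]; ring
  have hDr2 : ∀ k, DrR φ φ' (X' k) y₀ = s k - b0 k := by
    intro k; simp only [DrR, hs, hb0]; ring
  have hreal : ∀ k, a k + lam⁻¹ * (s k - bk k) ≤ L := by
    intro k
    have h2 := hL' k
    rw [tval, ← EReal.coe_toReal (hfk k) (hproper.2 _ (hX'X k)), ← EReal.coe_add,
      EReal.coe_le_coe_iff, hDr1 k] at h2
    exact h2
  have hflb : ∀ k, β - μ⁻¹ * (s k - b0 k) ≤ a k := by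
    intro k
    have := fval_lb hproper hβ (hX'X k) (hfk k)
    rwa [hDr2 k] at this
  -- limits of the auxiliary sequences
  have hbkt : Tendsto bk atTop (𝓝 (pR φ w + ⟪φ' w, xb - w⟫)) := by
    refine Tendsto.add ((psi_contAt hφ hw).tendsto.comp hY't) ?_
    exact Tendsto.inner ((grad_contAt hφ hw).tendsto.comp hY't) (hX't.sub hY't)
  have hb0t : Tendsto b0 atTop (𝓝 (pR φ y₀ + ⟪φ' y₀, xb - y₀⟫)) :=
    tendsto_const_nhds.add (Tendsto.inner tendsto_const_nhds (hX't.sub tendsto_const_nhds))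
  obtain ⟨Cb, hCb⟩ := seq_abs_bdd hbkt
  obtain ⟨Cb0, hCb0⟩ := seq_abs_bdd hb0t
  obtain ⟨Cx, hCx⟩ := seq_abs_bdd (Tendsto.norm (hX't.sub (tendsto_const_nhds (x := w))))
  -- s is bounded
  have hsub : ∀ k, s k ≤ (L - β + lam⁻¹ * Cb + μ⁻¹ * Cb0) / (lam⁻¹ - μ⁻¹) := by
    intro k
    rw [le_div_iff₀ hc]
    have h1 := hreal k
    have h2 := hflb k
    have h3 : lam⁻¹ * bk k ≤ lam⁻¹ * Cb :=
      mul_le_mul_of_nonneg_left (le_of_abs_le (hCb k)) (inv_nonneg.2 hlam.le)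
    have h4 : μ⁻¹ * (-Cb0) ≤ μ⁻¹ * b0 k :=
      mul_le_mul_of_nonneg_left (neg_le_of_abs_le (hCb0 k)) (inv_nonneg.2 hμ0.le)
    nlinarith
  have hslb : ∀ k, pR φ w - ‖φ' w‖ * Cx ≤ s k := by
    intro k
    have h1 := grad_ineq hφ hw (X' k)
    rw [phi_eq_coe hφ (hX'X k), EReal.coe_le_coe_iff] at h1
    have h2 : |⟪φ' w, X' k - w⟫| ≤ ‖φ' w‖ * Cx := by
      refine le_trans (abs_real_inner_le_norm _ _) ?_
      refine mul_le_mul_of_nonneg_left ?_ (norm_nonneg _)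
      exact le_trans (le_abs_self _) (hCx k)
    have h3 := neg_le_of_abs_le h2
    simp only [hs]
    linarith
  -- a is bounded
  obtain ⟨Ms, hMs⟩ : ∃ Ms, ∀ k, |s k| ≤ Ms := by
    refine ⟨max ((L - β + lam⁻¹ * Cb + μ⁻¹ * Cb0) / (lam⁻¹ - μ⁻¹))
      (-(pR φ w - ‖φ' w‖ * Cx)), fun k => abs_le.2 ⟨?_, ?_⟩⟩
    · have := hslb k
      have h3 : -(pR φ w - ‖φ' w‖ * Cx) ≤ max ((L - β + lam⁻¹ * Cb + μ⁻¹ * Cb0) / (lam⁻¹ - μ⁻¹)) (-(pR φ w - ‖φ' w‖ * Cx)) := le_max_right _ _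
      linarith
    · exact le_trans (hsub k) (le_max_left _ _)
  obtain ⟨Ma, hMa⟩ : ∃ Ma, ∀ k, |a k| ≤ Ma := by
    refine ⟨max (L + lam⁻¹ * Cb + lam⁻¹ * Ms) (-(β - μ⁻¹ * Ms - μ⁻¹ * Cb0)),
      fun k => abs_le.2 ⟨?_, ?_⟩⟩
    · have h2 := hflb k
      have h3 : μ⁻¹ * (s k - b0 k) ≤ μ⁻¹ * (Ms + Cb0) := by
        refine mul_le_mul_of_nonneg_left ?_ (inv_nonneg.2 hμ0.le)
        have h4 := abs_le.1 (hMs k)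
        have h5 := abs_le.1 (hCb0 k)
        linarith
      have h6 : -(max (L + lam⁻¹ * Cb + lam⁻¹ * Ms) (-(β - μ⁻¹ * Ms - μ⁻¹ * Cb0)))
          ≤ β - μ⁻¹ * Ms - μ⁻¹ * Cb0 := by
        have := le_max_right (L + lam⁻¹ * Cb + lam⁻¹ * Ms) (-(β - μ⁻¹ * Ms - μ⁻¹ * Cb0))
        linarith
      have h7 : μ⁻¹ * (Ms + Cb0) = μ⁻¹ * Ms + μ⁻¹ * Cb0 := by ring
      linarith
    · have h1 := hreal k
      have h3 : lam⁻¹ * (s k - bk k) ≥ lam⁻¹ * (-(Ms + Cb)) := by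
        refine mul_le_mul_of_nonneg_left ?_ (inv_nonneg.2 hlam.le)
        have h4 := abs_le.1 (hMs k)
        have h5 := abs_le.1 (hCb k)
        linarith
      have h8 : lam⁻¹ * (-(Ms + Cb)) = -(lam⁻¹ * Ms) - lam⁻¹ * Cb := by ring
      have h9 : L + lam⁻¹ * Cb + lam⁻¹ * Ms ≤ max (L + lam⁻¹ * Cb + lam⁻¹ * Ms)
        (-(β - μ⁻¹ * Ms - μ⁻¹ * Cb0)) := le_max_left _ _
      linarith
  -- extract convergent subsequences of (s, a)
  obtain ⟨sb, -, σ1, hσ1, hs1⟩ := tendsto_subseq_of_bounded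
    (Metric.isBounded_closedBall (x := (0:ℝ)) (r := Ms))
    (fun k => Metric.mem_closedBall.2 (by
      rw [Real.dist_eq, sub_zero]; exact hMs k))
  obtain ⟨ab, -, σ2, hσ2, ha2⟩ := tendsto_subseq_of_bounded
    (Metric.isBounded_closedBall (x := (0:ℝ)) (r := Ma))
    (fun k => Metric.mem_closedBall.2 (by
      rw [Real.dist_eq, sub_zero]; exact hMa (σ1 k)))
  set σ : ℕ → ℕ := σ1 ∘ σ2 with hσdef
  have hσ : StrictMono σ := hσ1.comp hσ2
  have hsσ : Tendsto (s ∘ σ) atTop (𝓝 sb) := hs1.comp hσ2.tendsto_atTop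
  have haσ : Tendsto (a ∘ σ) atTop (𝓝 ab) := ha2
  have hXσ : Tendsto (X' ∘ σ) atTop (𝓝 xb) := hX't.comp hσ.tendsto_atTop
  -- φ xb ≤ sb by lower semicontinuity
  have hphile : φ xb ≤ ((sb : ℝ) : EReal) := by
    by_contra hgt
    push_neg at hgt
    obtain ⟨cc, h1, h2⟩ := EReal.exists_between_coe_real hgt
    have hev := hφ.lsc xb (cc : EReal) h2
    have hev2 := hXσ.eventually hev
    have hccsb : (cc : ℝ) ≤ sb := by
      refine ge_of_tendsto hsσ ?_
      filter_upwards [hev2] with k hk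
      simp only [Function.comp_apply] at hk ⊢
      rw [phi_eq_coe hφ (hX'X (σ k)), gt_iff_lt, EReal.coe_lt_coe_iff] at hk
      exact hk.le
    rw [EReal.coe_lt_coe_iff] at h1
    linarith
  have hxbX : xb ∈ edom φ := by
    have : φ xb ≠ ⊤ := ne_top_of_le_ne_top (EReal.coe_ne_top sb) hphile
    exact this
  refine ⟨hxbX, ?_⟩
  -- f xb ≤ ab by lower semicontinuity on X
  have hfle : f xb ≤ ((ab : ℝ) : EReal) := by
    by_contra hgt
    push_neg at hgt
    obtain ⟨cc, h1, h2⟩ := EReal.exists_between_coe_real hgt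
    have hXσ' : Tendsto (X' ∘ σ) atTop (𝓝[edom φ] xb) :=
      tendsto_nhdsWithin_iff.2 ⟨hXσ, Eventually.of_forall (fun k => hX'X (σ k))⟩
    have hev := hlsc xb hxbX (cc : EReal) h2
    have hev2 := hXσ'.eventually hev
    have hccab : (cc : ℝ) ≤ ab := by
      refine ge_of_tendsto haσ ?_
      filter_upwards [hev2] with k hk
      simp only [Function.comp_apply] at hk ⊢
      have h3 : f (X' (σ k)) = ((a (σ k) : ℝ) : EReal) :=
        (EReal.coe_toReal (hfk (σ k)) (hproper.2 _ (hX'X (σ k)))).symm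
      rw [h3, gt_iff_lt, EReal.coe_lt_coe_iff] at hk
      exact hk.le
    rw [EReal.coe_lt_coe_iff] at h1
    linarith
  have hpRle : pR φ xb ≤ sb := by
    have := EReal.toReal_le_toReal hphile (hφ.ne_bot xb) (EReal.coe_ne_top sb)
    rwa [EReal.toReal_coe] at this
  -- pass to the limit in the objective values
  have hlimle : ab + lam⁻¹ * (sb - (pR φ w + ⟪φ' w, xb - w⟫)) ≤ L := by
    have hbkσ : Tendsto (bk ∘ σ) atTop (𝓝 (pR φ w + ⟪φ' w, xb - w⟫)) :=
      hbkt.comp hσ.tendsto_atTop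
    have hlim : Tendsto (fun k => a (σ k) + lam⁻¹ * (s (σ k) - bk (σ k))) atTop
        (𝓝 (ab + lam⁻¹ * (sb - (pR φ w + ⟪φ' w, xb - w⟫)))) :=
      Tendsto.add haσ (Tendsto.const_mul _ (hsσ.sub hbkσ))
    exact le_of_tendsto hlim (Eventually.of_forall (fun k => hreal (σ k)))
  -- conclude
  have hDrw : lam⁻¹ * DrR φ φ' xb w ≤ lam⁻¹ * (sb - (pR φ w + ⟪φ' w, xb - w⟫)) := by
    refine mul_le_mul_of_nonneg_left ?_ (inv_nonneg.2 hlam.le)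
    simp only [DrR]
    linarith
  calc tval φ φ' lam f w xb
      ≤ ((ab : ℝ) : EReal) + ((lam⁻¹ * (sb - (pR φ w + ⟪φ' w, xb - w⟫)) : ℝ) : EReal) := by
        rw [tval]
        exact add_le_add hfle (EReal.coe_le_coe_iff.2 hDrw)
    _ = ((ab + lam⁻¹ * (sb - (pR φ w + ⟪φ' w, xb - w⟫)) : ℝ) : EReal) :=
        (EReal.coe_add _ _).symm
    _ ≤ (L : EReal) := EReal.coe_le_coe_iff.2 hlimle
lemma benv_le_tval {φ : Eucl n → EReal} {φ' : Eucl n → Eucl n} (hφ : IsDGF φ φ')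
    (lam : ℝ) (f : Eucl n → EReal) {y x : Eucl n}
    (hy : y ∈ interior (edom φ)) (hx : x ∈ edom φ) :
    benv φ φ' lam f y ≤ tval φ φ' lam f y x := by
  rw [benv_eq hφ lam f hy]
  exact iInf₂_le x hx

lemma mem_bprox {φ : Eucl n → EReal} {φ' : Eucl n → Eucl n} (hφ : IsDGF φ φ')
    (lam : ℝ) (f : Eucl n → EReal) {y x : Eucl n} (hy : y ∈ interior (edom φ)) :
    x ∈ bprox φ φ' lam f y ↔ x ∈ edom φ ∧
      ∀ x' ∈ edom φ, tval φ φ' lam f y x ≤ tval φ φ' lam f y x' := by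
  rw [bprox_eq hφ lam f hy]
  exact mem_sep_iff

lemma tval_le_benv {φ : Eucl n → EReal} {φ' : Eucl n → Eucl n} (hφ : IsDGF φ φ')
    (lam : ℝ) (f : Eucl n → EReal) {y x : Eucl n} (hy : y ∈ interior (edom φ))
    (hx : x ∈ bprox φ φ' lam f y) :
    tval φ φ' lam f y x ≤ benv φ φ' lam f y := by
  rw [benv_eq hφ lam f hy]
  exact le_iInf₂ fun x' hx' => ((mem_bprox hφ lam f hy).1 hx).2 x' hx'

lemma one_div_coe_tendsto (r : ℝ) :
    Tendsto (fun m : ℕ => ((r + 1 / (m + 1) : ℝ) : EReal)) atTop (𝓝 ((r : ℝ) : EReal)) :=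
  EReal.tendsto_coe.2 (by
    have := tendsto_one_div_add_atTop_nhds_zero_nat (𝕜 := ℝ)
    have h2 : Tendsto (fun _ : ℕ => r) atTop (𝓝 r) := tendsto_const_nhds
    simpa using h2.add this)

lemma bprox_nonempty {φ : Eucl n → EReal} {φ' : Eucl n → Eucl n} {f : Eucl n → EReal}
    (hφ : IsDGF φ φ') (hco : OneCoercive φ) (hproper : ProperOn (edom φ) f)
    (hlsc : LowerSemicontinuousOn f (edom φ))
    {lam μ : ℝ} (hlam : 0 < lam) (hμl : lam < μ)
    {y₀ : Eucl n} (hy₀ : y₀ ∈ interior (edom φ)) {β : ℝ}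
    (hβ : ∀ x ∈ edom φ, (β : EReal) ≤ tval φ φ' μ f y₀ x)
    {y : Eucl n} (hy : y ∈ interior (edom φ)) :
    (bprox φ φ' lam f y).Nonempty := by
  obtain ⟨hnb, hnt⟩ := benv_finite hφ hco hproper hlam hμl hy₀ hβ hy
  set r := (benv φ φ' lam f y).toReal with hr
  have hbr : benv φ φ' lam f y = ((r : ℝ) : EReal) := (EReal.coe_toReal hnt hnb).symm
  have hsel : ∀ k : ℕ, ∃ xx, xx ∈ edom φ ∧
      tval φ φ' lam f y xx < ((r + 1 / (k + 1) : ℝ) : EReal) := by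
    intro k
    have hlt : benv φ φ' lam f y < ((r + 1 / (k + 1) : ℝ) : EReal) := by
      rw [hbr, EReal.coe_lt_coe_iff]
      have : (0:ℝ) < 1 / (k + 1) := by positivity
      linarith
    rw [benv_eq hφ lam f hy] at hlt
    obtain ⟨xx, hxx⟩ := iInf_lt_iff.1 hlt
    obtain ⟨hmem, hlt2⟩ := iInf_lt_iff.1 hxx
    exact ⟨xx, hmem, hlt2⟩
  choose xs hxsX hxslt using hsel
  obtain ⟨δ, hδ0, hsub, A, hA⟩ := coercive_bd hφ hco hproper hlam hμl hy₀ hβ hy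
  have hbound : ∀ k, ‖xs k‖ ≤ A + r + 1 := by
    intro k
    have h1 := hA y (Metric.mem_ball_self hδ0) (xs k) (hxsX k)
    have h2 := lt_of_le_of_lt h1 (hxslt k)
    rw [EReal.coe_lt_coe_iff] at h2
    have h3 : 1 / ((k:ℝ) + 1) ≤ 1 := by
      rw [div_le_one (by positivity)]
      simp
    linarith
  obtain ⟨xbar, -, σ, hσ, hxσ⟩ := tendsto_subseq_of_bounded
    (Metric.isBounded_closedBall (x := (0 : Eucl n)) (r := A + r + 1))
    (fun k => mem_closedBall_zero_iff.2 (hbound k))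
  have hkey : ∀ m : ℕ, xbar ∈ edom φ ∧
      tval φ φ' lam f y xbar ≤ ((r + 1 / (m + 1) : ℝ) : EReal) := by
    intro m
    refine keyLimit hφ hproper hlsc hlam hμl hy₀ hβ hy
      (fun k => hxsX (σ k)) tendsto_const_nhds hxσ ?_
    rw [eventually_atTop]
    refine ⟨m, fun k hk => ?_⟩
    refine le_trans (le_of_lt (hxslt (σ k))) ?_
    rw [EReal.coe_le_coe_iff]
    have h4 : (m:ℝ) + 1 ≤ (σ k : ℝ) + 1 := by
      have h5 : m ≤ σ k := le_trans hk hσ.le_apply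
      have := Nat.cast_le (α := ℝ) |>.2 h5
      linarith
    have h6 : 1 / ((σ k : ℝ) + 1) ≤ 1 / ((m:ℝ) + 1) :=
      one_div_le_one_div_of_le (by positivity) h4
    linarith
  have hxbarX : xbar ∈ edom φ := (hkey 0).1
  have hfin : tval φ φ' lam f y xbar ≤ benv φ φ' lam f y := by
    rw [hbr]
    exact ge_of_tendsto (one_div_coe_tendsto r) (Eventually.of_forall fun m => (hkey m).2)
  refine ⟨xbar, (mem_bprox hφ lam f hy).2 ⟨hxbarX, fun x' hx' => ?_⟩⟩
  exact le_trans hfin (benv_le_tval hφ lam f hy hx')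
lemma benv_usc {φ : Eucl n → EReal} {φ' : Eucl n → Eucl n} {f : Eucl n → EReal}
    (hφ : IsDGF φ φ') (hco : OneCoercive φ) (hproper : ProperOn (edom φ) f)
    {lam μ : ℝ} (hlam : 0 < lam) (hμl : lam < μ)
    {y₀ : Eucl n} (hy₀ : y₀ ∈ interior (edom φ)) {β : ℝ}
    (hβ : ∀ x ∈ edom φ, (β : EReal) ≤ tval φ φ' μ f y₀ x)
    {y : Eucl n} (hy : y ∈ interior (edom φ)) {ε : ℝ} (hε : 0 < ε) :
    ∀ᶠ y' in 𝓝[interior (edom φ)] y,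
      benv φ φ' lam f y' ≤ (((benv φ φ' lam f y).toReal + ε : ℝ) : EReal) := by
  obtain ⟨hnb, hnt⟩ := benv_finite hφ hco hproper hlam hμl hy₀ hβ hy
  set r := (benv φ φ' lam f y).toReal with hrdef
  have hbr : benv φ φ' lam f y = ((r : ℝ) : EReal) := (EReal.coe_toReal hnt hnb).symm
  -- pick a near-minimizer
  have hlt : benv φ φ' lam f y < ((r + ε / 2 : ℝ) : EReal) := by
    rw [hbr, EReal.coe_lt_coe_iff]; linarith
  rw [benv_eq hφ lam f hy] at hlt
  obtain ⟨x₀, hxx⟩ := iInf_lt_iff.1 hlt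
  obtain ⟨hx₀X, hlt2⟩ := iInf_lt_iff.1 hxx
  have hfx₀ : f x₀ ≠ ⊤ := by
    intro h
    rw [tval, h, EReal.top_add_coe] at hlt2
    exact (not_le.2 (EReal.coe_lt_top _)) hlt2.le
  set a₀ := (f x₀).toReal with ha₀
  have hfx₀c : f x₀ = ((a₀ : ℝ) : EReal) := (EReal.coe_toReal hfx₀ (hproper.2 _ hx₀X)).symm
  have hgy : a₀ + lam⁻¹ * DrR φ φ' x₀ y < r + ε / 2 := by
    rw [tval, hfx₀c, ← EReal.coe_add, EReal.coe_lt_coe_iff] at hlt2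
    exact hlt2
  -- continuity of y' ↦ a₀ + lam⁻¹ * DrR x₀ y'
  have hgc : ContinuousAt (fun y' => a₀ + lam⁻¹ * DrR φ φ' x₀ y') y := by
    have hDc : ContinuousAt (fun y' => DrR φ φ' x₀ y') y := by
      simp only [DrR]
      exact (continuousAt_const.sub (psi_contAt hφ hy)).sub
        (ContinuousAt.inner (grad_contAt hφ hy) (continuousAt_const.sub continuousAt_id))
    exact continuousAt_const.add (hDc.const_mul lam⁻¹)
  have hev : ∀ᶠ y' in 𝓝 y, a₀ + lam⁻¹ * DrR φ φ' x₀ y' < r + ε := by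
    refine hgc.tendsto.eventually_lt_const ?_
    linarith
  filter_upwards [hev.filter_mono nhdsWithin_le_nhds,
    eventually_mem_nhdsWithin] with y' hlt' hy'Y
  have h1 : benv φ φ' lam f y' ≤ tval φ φ' lam f y' x₀ := benv_le_tval hφ lam f hy'Y hx₀X
  refine le_trans h1 ?_
  rw [tval, hfx₀c, ← EReal.coe_add, EReal.coe_le_coe_iff]
  linarith

lemma benv_lsc {φ : Eucl n → EReal} {φ' : Eucl n → Eucl n} {f : Eucl n → EReal}
    (hφ : IsDGF φ φ') (hco : OneCoercive φ) (hproper : ProperOn (edom φ) f)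
    (hlsc : LowerSemicontinuousOn f (edom φ))
    {lam μ : ℝ} (hlam : 0 < lam) (hμl : lam < μ)
    {y₀ : Eucl n} (hy₀ : y₀ ∈ interior (edom φ)) {β : ℝ}
    (hβ : ∀ x ∈ edom φ, (β : EReal) ≤ tval φ φ' μ f y₀ x)
    {y : Eucl n} (hy : y ∈ interior (edom φ)) {ε : ℝ} (hε : 0 < ε) :
    ∀ᶠ y' in 𝓝[interior (edom φ)] y,
      (((benv φ φ' lam f y).toReal - ε : ℝ) : EReal) ≤ benv φ φ' lam f y' := by
  obtain ⟨hnb, hnt⟩ := benv_finite hφ hco hproper hlam hμl hy₀ hβ hy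
  set r := (benv φ φ' lam f y).toReal with hrdef
  have hbr : benv φ φ' lam f y = ((r : ℝ) : EReal) := (EReal.coe_toReal hnt hnb).symm
  by_contra hcon
  rw [Filter.not_eventually] at hcon
  have hfreq : ∃ᶠ y' in 𝓝[interior (edom φ)] y,
      benv φ φ' lam f y' < ((r - ε : ℝ) : EReal) := by
    refine hcon.mono fun y' h => ?_
    exact not_le.1 h
  obtain ⟨δ, hδ0, hsubY, A, hA⟩ := coercive_bd hφ hco hproper hlam hμl hy₀ hβ hy
  obtain ⟨δ', hδ'0, hsubY', U, hU⟩ := upper_bd hφ hproper lam hy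
  have hsel : ∀ k : ℕ, ∃ y', (y' ∈ Metric.ball y (min (min δ δ') (1 / (k + 1)))
      ∩ interior (edom φ)) ∧ benv φ φ' lam f y' < ((r - ε : ℝ) : EReal) := by
    intro k
    have hpos : 0 < min (min δ δ') (1 / ((k:ℝ) + 1)) :=
      lt_min (lt_min hδ0 hδ'0) (by positivity)
    obtain ⟨y', hy'1, hy'2⟩ :=
      ((Metric.nhdsWithin_basis_ball).frequently_iff.1 hfreq) _ hpos
    exact ⟨y', hy'1, hy'2⟩
  choose ys hys1 hys2 using hsel
  have hysY : ∀ k, ys k ∈ interior (edom φ) := fun k => (hys1 k).2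
  have hysδ : ∀ k, ys k ∈ Metric.ball y δ := fun k => Metric.mem_ball.2
    (lt_of_lt_of_le (Metric.mem_ball.1 (hys1 k).1)
      (le_trans (min_le_left _ _) (min_le_left _ _)))
  have hysδ' : ∀ k, ys k ∈ Metric.ball y δ' := fun k => Metric.mem_ball.2
    (lt_of_lt_of_le (Metric.mem_ball.1 (hys1 k).1)
      (le_trans (min_le_left _ _) (min_le_right _ _)))
  have hyst : Tendsto ys atTop (𝓝 y) := by
    rw [tendsto_iff_dist_tendsto_zero]
    refine squeeze_zero (fun k => dist_nonneg) (fun k => ?_)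
      tendsto_one_div_add_atTop_nhds_zero_nat
    exact le_of_lt (lt_of_lt_of_le (Metric.mem_ball.1 (hys1 k).1) (min_le_right _ _))
  have hne : ∀ k, (bprox φ φ' lam f (ys k)).Nonempty :=
    fun k => bprox_nonempty hφ hco hproper hlsc hlam hμl hy₀ hβ (hysY k)
  choose xs hxs using hne
  have hxsX : ∀ k, xs k ∈ edom φ :=
    fun k => ((mem_bprox hφ lam f (hysY k)).1 (hxs k)).1
  have htv : ∀ k, tval φ φ' lam f (ys k) (xs k) ≤ ((r - ε : ℝ) : EReal) :=
    fun k => le_trans (tval_le_benv hφ lam f (hysY k) (hxs k)) (hys2 k).le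
  have hbound : ∀ k, ‖xs k‖ ≤ A + (r - ε) := by
    intro k
    have h1 := le_trans (hA (ys k) (hysδ k) (xs k) (hxsX k)) (htv k)
    rw [EReal.coe_le_coe_iff] at h1
    linarith
  obtain ⟨xbar, -, σ, hσ, hxσ⟩ := tendsto_subseq_of_bounded
    (Metric.isBounded_closedBall (x := (0 : Eucl n)) (r := A + (r - ε)))
    (fun k => mem_closedBall_zero_iff.2 (hbound k))
  have hkey := keyLimit hφ hproper hlsc hlam hμl hy₀ hβ hy
    (fun k => hxsX (σ k)) (hyst.comp hσ.tendsto_atTop) hxσ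
    (L := r - ε) (Eventually.of_forall fun k => htv (σ k))
  have h2 : benv φ φ' lam f y ≤ ((r - ε : ℝ) : EReal) :=
    le_trans (benv_le_tval hφ lam f hy hkey.1) hkey.2
  rw [hbr, EReal.coe_le_coe_iff] at h2
  linarith

lemma benv_contWithin {φ : Eucl n → EReal} {φ' : Eucl n → Eucl n} {f : Eucl n → EReal}
    (hφ : IsDGF φ φ') (hco : OneCoercive φ) (hproper : ProperOn (edom φ) f)
    (hlsc : LowerSemicontinuousOn f (edom φ))
    {lam μ : ℝ} (hlam : 0 < lam) (hμl : lam < μ)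
    {y₀ : Eucl n} (hy₀ : y₀ ∈ interior (edom φ)) {β : ℝ}
    (hβ : ∀ x ∈ edom φ, (β : EReal) ≤ tval φ φ' μ f y₀ x)
    {y : Eucl n} (hy : y ∈ interior (edom φ)) :
    ContinuousWithinAt (benv φ φ' lam f) (interior (edom φ)) y := by
  have hert : Tendsto (fun y' => (benv φ φ' lam f y').toReal)
      (𝓝[interior (edom φ)] y) (𝓝 ((benv φ φ' lam f y).toReal)) := by
    rw [Metric.tendsto_nhds]
    intro ε hε
    have h1 := benv_usc hφ hco hproper hlam hμl hy₀ hβ hy (half_pos hε)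
    have h2 := benv_lsc hφ hco hproper hlsc hlam hμl hy₀ hβ hy (half_pos hε)
    filter_upwards [h1, h2, eventually_mem_nhdsWithin] with y' hu hl hy'Y
    obtain ⟨hnb', hnt'⟩ := benv_finite hφ hco hproper hlam hμl hy₀ hβ hy'Y
    have hbr' : benv φ φ' lam f y' = (((benv φ φ' lam f y').toReal : ℝ) : EReal) :=
      (EReal.coe_toReal hnt' hnb').symm
    rw [hbr', EReal.coe_le_coe_iff] at hu hl
    rw [Real.dist_eq, abs_lt]
    constructor <;> [linarith; linarith]
  obtain ⟨hnb, hnt⟩ := benv_finite hφ hco hproper hlam hμl hy₀ hβ hy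
  have hbr : benv φ φ' lam f y = (((benv φ φ' lam f y).toReal : ℝ) : EReal) :=
    (EReal.coe_toReal hnt hnb).symm
  have htend : Tendsto (fun y' => (((benv φ φ' lam f y').toReal : ℝ) : EReal))
      (𝓝[interior (edom φ)] y) (𝓝 (benv φ φ' lam f y)) := by
    rw [hbr]
    exact EReal.tendsto_coe.2 hert
  refine Tendsto.congr' ?_ htend
  filter_upwards [eventually_mem_nhdsWithin] with y' hy'Y
  obtain ⟨hnb', hnt'⟩ := benv_finite hφ hco hproper hlam hμl hy₀ hβ hy'Y
  exact EReal.coe_toReal hnt' hnb'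
lemma prox_limit {φ : Eucl n → EReal} {φ' : Eucl n → Eucl n} {f : Eucl n → EReal}
    (hφ : IsDGF φ φ') (hco : OneCoercive φ) (hproper : ProperOn (edom φ) f)
    (hlsc : LowerSemicontinuousOn f (edom φ))
    {lam μ : ℝ} (hlam : 0 < lam) (hμl : lam < μ)
    {y₀ : Eucl n} (hy₀ : y₀ ∈ interior (edom φ)) {β : ℝ}
    (hβ : ∀ x ∈ edom φ, (β : EReal) ≤ tval φ φ' μ f y₀ x)
    {w : Eucl n} (hw : w ∈ interior (edom φ)) {y x : ℕ → Eucl n} {xb : Eucl n}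
    (hyY : ∀ k, y k ∈ interior (edom φ))
    (hmem : ∀ k, x k ∈ bprox φ φ' lam f (y k))
    (hyt : Tendsto y atTop (𝓝 w)) (hxt : Tendsto x atTop (𝓝 xb)) :
    xb ∈ bprox φ φ' lam f w := by
  obtain ⟨hnb, hnt⟩ := benv_finite hφ hco hproper hlam hμl hy₀ hβ hw
  set r := (benv φ φ' lam f w).toReal with hrdef
  have hbr : benv φ φ' lam f w = ((r : ℝ) : EReal) := (EReal.coe_toReal hnt hnb).symm
  have hxX : ∀ k, x k ∈ edom φ := fun k => ((mem_bprox hφ lam f (hyY k)).1 (hmem k)).1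
  have hyt' : Tendsto y atTop (𝓝[interior (edom φ)] w) :=
    tendsto_nhdsWithin_iff.2 ⟨hyt, Eventually.of_forall hyY⟩
  have hbenvt : Tendsto (fun k => benv φ φ' lam f (y k)) atTop (𝓝 ((r : ℝ) : EReal)) := by
    rw [← hbr]
    exact (benv_contWithin hφ hco hproper hlsc hlam hμl hy₀ hβ hw).tendsto.comp hyt'
  have hkey : ∀ m : ℕ, xb ∈ edom φ ∧
      tval φ φ' lam f w xb ≤ ((r + 1 / (m + 1) : ℝ) : EReal) := by
    intro m
    refine keyLimit hφ hproper hlsc hlam hμl hy₀ hβ hw hxX hyt hxt ?_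
    have hlt : ((r : ℝ) : EReal) < ((r + 1 / (m + 1) : ℝ) : EReal) := by
      rw [EReal.coe_lt_coe_iff]
      have : (0:ℝ) < 1 / ((m:ℝ) + 1) := by positivity
      linarith
    filter_upwards [hbenvt.eventually_lt_const hlt] with k hk
    exact le_trans (tval_le_benv hφ lam f (hyY k) (hmem k)) hk.le
  have hfin : tval φ φ' lam f w xb ≤ benv φ φ' lam f w := by
    rw [hbr]
    exact ge_of_tendsto (one_div_coe_tendsto r) (Eventually.of_forall fun m => (hkey m).2)
  exact (mem_bprox hφ lam f hw).2 ⟨(hkey 0).1,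
    fun x' hx' => le_trans hfin (benv_le_tval hφ lam f hw hx')⟩
/-- Suppose `φ` is 1-coercive and `f : X → ℝ̄` is proper, lsc on `X`, and
`φ`-prox-bounded with threshold `λ_f`.  For every `λ ∈ (0, λ_f)`:
(i) `dom env_λ f = dom prox_{λf} = Y`, i.e. `env_λ f` is real-valued on `Y` and
`prox_{λf}(y) ≠ ∅` for every `y ∈ Y`;
(ii) `env_λ f : Y → ℝ` is continuous;
(iii) `prox_{λf} : Y ⇉ X` is compact-valued and usc; in particular it is locally bounded
and osc, and its graph is closed in `Y × ℝⁿ`. -/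
theorem mainprop_left {n : ℕ} (φ : Eucl n → EReal) (φ' : Eucl n → Eucl n)
    (hφ : IsDGF φ φ') (hco : OneCoercive φ)
    (f : Eucl n → EReal) (hproper : ProperOn (edom φ) f)
    (hlsc : LowerSemicontinuousOn f (edom φ))
    (lam : ℝ) (hlam : 0 < lam) (hthr : ENNReal.ofReal lam < pbThreshold φ φ' f) :
    (∀ y ∈ interior (edom φ),
      benv φ φ' lam f y ≠ ⊤ ∧ benv φ φ' lam f y ≠ ⊥ ∧ (bprox φ φ' lam f y).Nonempty) ∧
    ContinuousOn (benv φ φ' lam f) (interior (edom φ)) ∧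
    (∀ y ∈ interior (edom φ),
      IsCompact (bprox φ φ' lam f y) ∧
      UscAt (interior (edom φ)) (bprox φ φ' lam f) y ∧
      LocBddAt (interior (edom φ)) (bprox φ φ' lam f) y ∧
      OscAt (interior (edom φ)) (edom φ) (bprox φ φ' lam f) y) ∧
    (∀ p ∈ closure (svGraph (interior (edom φ)) (bprox φ φ' lam f)),
      p.1 ∈ interior (edom φ) → p ∈ svGraph (interior (edom φ)) (bprox φ φ' lam f)) := by
  obtain ⟨μ, hμl, hμ0, hpb⟩ := exists_mu hthr
  obtain ⟨y₀, hy₀, β, hβ⟩ := exists_beta hφ hpb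
  have hfin : ∀ y ∈ interior (edom φ), benv φ φ' lam f y ≠ ⊥ ∧ benv φ φ' lam f y ≠ ⊤ :=
    fun y hy => benv_finite hφ hco hproper hlam hμl hy₀ hβ hy
  refine ⟨?_, ?_, ?_, ?_⟩
  · intro y hy
    exact ⟨(hfin y hy).2, (hfin y hy).1,
      bprox_nonempty hφ hco hproper hlsc hlam hμl hy₀ hβ hy⟩
  · exact fun y hy => benv_contWithin hφ hco hproper hlsc hlam hμl hy₀ hβ hy
  · intro y hy
    obtain ⟨δ, hδ0, hsubY, A, hA⟩ := coercive_bd hφ hco hproper hlam hμl hy₀ hβ hy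
    obtain ⟨δ', hδ'0, hsubY', U, hU⟩ := upper_bd hφ hproper lam hy
    have hbd : ∀ y' ∈ Metric.ball y (min δ δ'), ∀ x' ∈ bprox φ φ' lam f y',
        ‖x'‖ ≤ A + U := by
      intro y' hy' x' hx'
      have hy'δ : y' ∈ Metric.ball y δ :=
        Metric.ball_subset_ball (min_le_left _ _) hy'
      have hy'δ' : y' ∈ Metric.ball y δ' :=
        Metric.ball_subset_ball (min_le_right _ _) hy'
      have hy'Y : y' ∈ interior (edom φ) := hsubY hy'δ
      have hx'X : x' ∈ edom φ := ((mem_bprox hφ lam f hy'Y).1 hx').1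
      have h1 := hA y' hy'δ x' hx'X
      have h2 := le_trans (tval_le_benv hφ lam f hy'Y hx') (hU y' hy'δ')
      have h3 := le_trans h1 h2
      rw [EReal.coe_le_coe_iff] at h3
      linarith
    have hSco : bprox φ φ' lam f y ⊆ Metric.closedBall 0 (A + U) :=
      fun x hx => mem_closedBall_zero_iff.2
        (hbd y (Metric.mem_ball_self (lt_min hδ0 hδ'0)) x hx)
    have hclosed : IsClosed (bprox φ φ' lam f y) := by
      refine IsSeqClosed.isClosed ?_
      intro u xb hu hut
      exact prox_limit hφ hco hproper hlsc hlam hμl hy₀ hβ hy (fun _ => hy) hu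
        tendsto_const_nhds hut
    refine ⟨(isCompact_closedBall _ _).of_isClosed_subset hclosed hSco, ?_, ?_, ?_⟩
    · -- UscAt
      intro V hV hTV
      by_contra hno
      push_neg at hno
      have hsel : ∀ k : ℕ, ∃ y' x', (y' ∈ Metric.ball y (min (min δ δ') (1 / (k + 1)))
          ∩ interior (edom φ)) ∧ x' ∈ bprox φ φ' lam f y' ∧ x' ∉ V := by
        intro k
        have hpos : 0 < min (min δ δ') (1 / ((k:ℝ) + 1)) :=
          lt_min (lt_min hδ0 hδ'0) (by positivity)
        have hN1 : Metric.ball y (min (min δ δ') (1 / (k + 1))) ∩ interior (edom φ)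
            ⊆ interior (edom φ) := inter_subset_right
        have hN2 : Metric.ball y (min (min δ δ') (1 / (k + 1))) ∩ interior (edom φ)
            ∈ 𝓝[interior (edom φ)] y :=
          inter_mem (mem_nhdsWithin_of_mem_nhds (Metric.ball_mem_nhds y hpos))
            self_mem_nhdsWithin
        obtain ⟨z, hz, hzV⟩ := Set.not_subset.1 (hno _ hN1 hN2)
        rw [mem_iUnion₂] at hz
        obtain ⟨y', hy'N, hzp⟩ := hz
        exact ⟨y', z, hy'N, hzp, hzV⟩
      choose ys xs hys hxs hxsV using hsel
      have hysY : ∀ k, ys k ∈ interior (edom φ) := fun k => (hys k).2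
      have hysδ : ∀ k, ys k ∈ Metric.ball y (min δ δ') := fun k => Metric.mem_ball.2
        (lt_of_lt_of_le (Metric.mem_ball.1 (hys k).1) (min_le_left _ _))
      have hyst : Tendsto ys atTop (𝓝 y) := by
        rw [tendsto_iff_dist_tendsto_zero]
        refine squeeze_zero (fun k => dist_nonneg) (fun k => ?_)
          tendsto_one_div_add_atTop_nhds_zero_nat
        exact le_of_lt (lt_of_lt_of_le (Metric.mem_ball.1 (hys k).1) (min_le_right _ _))
      have hbound : ∀ k, ‖xs k‖ ≤ A + U := fun k => hbd (ys k) (hysδ k) (xs k) (hxs k)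
      obtain ⟨xbar, -, σ, hσ, hxσ⟩ := tendsto_subseq_of_bounded
        (Metric.isBounded_closedBall (x := (0 : Eucl n)) (r := A + U))
        (fun k => mem_closedBall_zero_iff.2 (hbound k))
      have hxbV : xbar ∉ V := by
        have hcl : IsClosed Vᶜ := hV.isClosed_compl
        exact hcl.mem_of_tendsto hxσ (Eventually.of_forall fun k => hxsV (σ k))
      have hxbp : xbar ∈ bprox φ φ' lam f y :=
        prox_limit hφ hco hproper hlsc hlam hμl hy₀ hβ hy (fun k => hysY (σ k))
          (fun k => hxs (σ k)) (hyst.comp hσ.tendsto_atTop) hxσ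
      exact hxbV (hTV hxbp)
    · -- LocBddAt
      refine ⟨Metric.ball y (min δ δ') ∩ interior (edom φ), inter_subset_right,
        inter_mem (mem_nhdsWithin_of_mem_nhds
          (Metric.ball_mem_nhds y (lt_min hδ0 hδ'0))) self_mem_nhdsWithin, ?_⟩
      refine (Metric.isBounded_closedBall (x := (0 : Eucl n)) (r := A + U)).subset ?_
      intro z hz
      rw [mem_iUnion₂] at hz
      obtain ⟨y', hy', hzp⟩ := hz
      exact mem_closedBall_zero_iff.2 (hbd y' hy'.1 z hzp)
    · -- OscAt
      intro z hzX u v hu hv hut hvt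
      exact prox_limit hφ hco hproper hlsc hlam hμl hy₀ hβ hy hu hv hut hvt
  · -- closed graph
    intro p hp hp1
    obtain ⟨q, hq, hqt⟩ := mem_closure_iff_seq_limit.1 hp
    have hyY : ∀ k, (q k).1 ∈ interior (edom φ) := fun k => (hq k).1
    have hmem : ∀ k, (q k).2 ∈ bprox φ φ' lam f ((q k).1) := fun k => (hq k).2
    have h1t : Tendsto (fun k => (q k).1) atTop (𝓝 p.1) :=
      (continuous_fst.tendsto p).comp hqt
    have h2t : Tendsto (fun k => (q k).2) atTop (𝓝 p.2) :=
      (continuous_snd.tendsto p).comp hqt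
    exact ⟨hp1, prox_limit hφ hco hproper hlsc hlam hμl hy₀ hβ hp1 hyY hmem h1t h2t⟩

end BregmanPaper
end
end

section
/- Suppose dom φ = ℝⁿ (so X = Y = ℝⁿ), and let g : ℝⁿ → ℝ ∪ {±∞} be proper and right φ-prox-bounded with threshold λ̄_g. Then for every λ ∈ (0, λ̄_g): (i) env*_λ g : ℝⁿ → ℝ is real-valued and locally Lipschitz continuous; (ii) if φ is Legendre, then the restriction (∇φ ▷ g)|_{dom φ*} is (left) φ*-prox-bounded with threshold equal to λ̄_g; (iii) λ(∇φ ▷ g) + φ* is 1-coercive, and it is lsc on all of ℝⁿ provided (∇φ ▷ g)|_{dom φ*} is lsc; for the latter it suffices that g be lsc and that either φ be Legendre with dom φ* open, or g be coercive, or φ be 1-coercive. -/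
open Filter Topology Bornology Set RealInnerProductSpace Classical

noncomputable section

namespace BregmanPaper

variable {n : ℕ}

section AuxLemmas

variable {n : ℕ}

private lemma ereal_cases (a : EReal) (h : a ≠ ⊥) : a = ⊤ ∨ ∃ r : ℝ, a = (r : EReal) := by
  induction a using EReal.rec with
  | bot => exact absurd rfl h
  | coe r => exact Or.inr ⟨r, rfl⟩
  | top => exact Or.inl rfl

private lemma line_hasDerivAt {p : Eucl n → ℝ} {u y : Eucl n} (hg : HasGradientAt p u y)
    (d : Eucl n) : HasDerivAt (fun t : ℝ => p (y + t • d)) ⟪u, d⟫ 0 := by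
  have hc : HasDerivAt (fun t : ℝ => y + t • d) d 0 := by
    simpa using ((hasDerivAt_id (0 : ℝ)).smul_const d).const_add y
  have hf := hg.hasFDerivAt
  have hf' : HasFDerivAt p ((InnerProductSpace.toDual ℝ (Eucl n)) u)
      ((fun t : ℝ => y + t • d) 0) := by simpa using hf
  have := hf'.comp_hasDerivAt 0 hc
  simpa [InnerProductSpace.toDual_apply_apply, Function.comp_def] using this

private lemma slope_tendsto {p : Eucl n → ℝ} {u y : Eucl n} (hg : HasGradientAt p u y)
    (d : Eucl n) :
    Tendsto (fun t : ℝ => (p (y + t • d) - p y) / t) (𝓝[>] 0) (𝓝 ⟪u, d⟫) := by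
  have hd := line_hasDerivAt hg d
  have h := hasDerivAt_iff_tendsto_slope.mp hd
  have h2 : Tendsto (slope (fun t : ℝ => p (y + t • d)) 0) (𝓝[>] 0) (𝓝 ⟪u, d⟫) :=
    h.mono_left (nhdsWithin_mono _ (fun t ht => ne_of_gt ht))
  refine h2.congr' ?_
  filter_upwards [self_mem_nhdsWithin] with t ht
  simp [slope_def_field]

private lemma grad_mono {p : Eucl n → ℝ} (hconv : ConvexOn ℝ Set.univ p) {y u : Eucl n}
    (hg : HasGradientAt p u y) (z : Eucl n) : p y + ⟪u, z - y⟫ ≤ p z := by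
  have hslope := slope_tendsto hg (z - y)
  have hb : ∀ᶠ t : ℝ in 𝓝[>] 0, (p (y + t • (z - y)) - p y) / t ≤ p z - p y := by
    filter_upwards [Ioc_mem_nhdsGT_of_mem (Set.mem_Ico.mpr ⟨le_refl (0:ℝ), zero_lt_one⟩)]
      with t ht
    obtain ⟨ht0, ht1⟩ := ht
    have hcc := hconv.2 (Set.mem_univ y) (Set.mem_univ z)
      (show (0:ℝ) ≤ 1 - t by linarith) (show (0:ℝ) ≤ t by linarith) (by ring)
    have hpt : (1 - t) • y + t • z = y + t • (z - y) := by module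
    rw [hpt] at hcc
    rw [div_le_iff₀ ht0]
    simp only [smul_eq_mul] at hcc
    nlinarith
  have := le_of_tendsto hslope hb
  linarith

private lemma grad_unique {p : Eucl n → ℝ} {y u v : Eucl n}
    (hsub : ∀ z, p y + ⟪u, z - y⟫ ≤ p z) (hg : HasGradientAt p v y) : u = v := by
  have key : ∀ d : Eucl n, ⟪u, d⟫ ≤ ⟪v, d⟫ := by
    intro d
    have hslope := slope_tendsto hg d
    refine ge_of_tendsto hslope ?_
    filter_upwards [self_mem_nhdsWithin] with t ht
    have := hsub (y + t • d)
    rw [le_div_iff₀ ht]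
    rw [show (y + t • d) - y = t • d by abel] at this
    rw [real_inner_smul_right] at this
    linarith
  have h2 := key (u - v)
  have h3 : ⟪u - v, u - v⟫ ≤ 0 := by rw [inner_sub_left]; linarith
  have h4 : u - v = 0 := by
    have := real_inner_self_nonpos.mp h3
    exact this
  exact sub_eq_zero.mp h4

end AuxLemmas
section ConjLemmas

variable {n : ℕ} {φ : Eucl n → EReal} {p : Eucl n → ℝ}

private lemma fconj_eq (hrep : ∀ x, φ x = (p x : EReal)) (ξ : Eucl n) :
    fconj φ ξ = ⨆ x : Eucl n, ((⟪x, ξ⟫ - p x : ℝ) : EReal) := by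
  unfold fconj
  refine iSup_congr fun x => ?_
  rw [hrep x]; norm_cast

private lemma fconj_ge (hrep : ∀ x, φ x = (p x : EReal)) (x ξ : Eucl n) :
    ((⟪x, ξ⟫ - p x : ℝ) : EReal) ≤ fconj φ ξ := by
  rw [fconj_eq hrep]
  exact le_iSup (fun x : Eucl n => ((⟪x, ξ⟫ - p x : ℝ) : EReal)) x

private lemma fconj_ne_bot (hrep : ∀ x, φ x = (p x : EReal)) (ξ : Eucl n) :
    fconj φ ξ ≠ ⊥ :=
  ((EReal.bot_lt_coe _).trans_le (fconj_ge hrep 0 ξ)).ne'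

private lemma fconj_fiber {G : Eucl n → Eucl n} (hconv : ConvexOn ℝ Set.univ p)
    (hgrad : ∀ x, HasGradientAt p (G x) x) (hrep : ∀ x, φ x = (p x : EReal))
    {y ξ : Eucl n} (hy : G y = ξ) :
    fconj φ ξ = ((⟪y, ξ⟫ - p y : ℝ) : EReal) := by
  subst hy
  refine le_antisymm ?_ (fconj_ge hrep y (G y))
  rw [fconj_eq hrep]
  refine iSup_le fun x => ?_
  rw [EReal.coe_le_coe_iff]
  have h := grad_mono hconv (hgrad y) x
  have hi : ⟪G y, x - y⟫ = ⟪x, G y⟫ - ⟪y, G y⟫ := by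
    rw [inner_sub_right, real_inner_comm (G y) x, real_inner_comm (G y) y]
  linarith

private lemma fconj_fiber_dom {G : Eucl n → Eucl n} (hconv : ConvexOn ℝ Set.univ p)
    (hgrad : ∀ x, HasGradientAt p (G x) x) (hrep : ∀ x, φ x = (p x : EReal))
    {y ξ : Eucl n} (hy : G y = ξ) : fconj φ ξ ≠ ⊤ := by
  rw [fconj_fiber hconv hgrad hrep hy]; exact EReal.coe_ne_top _

private lemma fconj_fiber_toReal {G : Eucl n → Eucl n} (hconv : ConvexOn ℝ Set.univ p)
    (hgrad : ∀ x, HasGradientAt p (G x) x) (hrep : ∀ x, φ x = (p x : EReal))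
    {y ξ : Eucl n} (hy : G y = ξ) : (fconj φ ξ).toReal = ⟪y, ξ⟫ - p y := by
  rw [fconj_fiber hconv hgrad hrep hy, EReal.toReal_coe]

private lemma fconj_toReal_ge (hrep : ∀ x, φ x = (p x : EReal)) (x : Eucl n) {ξ : Eucl n}
    (hξ : fconj φ ξ ≠ ⊤) : ⟪x, ξ⟫ - p x ≤ (fconj φ ξ).toReal := by
  have h := EReal.toReal_le_toReal (fconj_ge hrep x ξ) (EReal.coe_ne_bot _) hξ
  rwa [EReal.toReal_coe] at h

private lemma fconj_coercive_bd (hrep : ∀ x, φ x = (p x : EReal)) {c₀ : ℝ} (hc₀ : 0 < c₀)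
    (w : Eucl n) {ξ : Eucl n} (hξ : fconj φ ξ ≠ ⊤) :
    ⟪w, ξ⟫ - c₀ * p (c₀⁻¹ • w) ≤ c₀ * (fconj φ ξ).toReal := by
  have h2 := fconj_toReal_ge hrep (c₀⁻¹ • w) hξ
  rw [real_inner_smul_left] at h2
  have h3 := mul_le_mul_of_nonneg_left h2 hc₀.le
  have hcc : c₀ * (c₀⁻¹ * ⟪w, ξ⟫ - p (c₀⁻¹ • w)) = ⟪w, ξ⟫ - c₀ * p (c₀⁻¹ • w) := by
    field_simp
  linarith [hcc ▸ h3]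

private lemma fconj_coe (hrep : ∀ x, φ x = (p x : EReal)) {ξ : Eucl n}
    (hξ : fconj φ ξ ≠ ⊤) : fconj φ ξ = (((fconj φ ξ).toReal : ℝ) : EReal) :=
  (EReal.coe_toReal hξ (fconj_ne_bot hrep ξ)).symm

private lemma benvR_eq (hint : interior (edom φ) = Set.univ)
    (hrep : ∀ x, φ x = (p x : EReal)) (G : Eucl n → Eucl n) (l : ℝ) (g : Eucl n → EReal)
    (x : Eucl n) :
    benvR φ G l g x
      = ⨅ y : Eucl n, (g y + ((l⁻¹ * (p x - p y - ⟪G y, x - y⟫) : ℝ) : EReal)) := by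
  unfold benvR breg
  simp only [hint, Set.mem_univ, if_true, iInf_univ, iInf_true]
  refine iInf_congr fun y => ?_
  rw [hrep x, hrep y]
  norm_cast

private lemma ec_eq (hint : interior (edom φ) = Set.univ) (G : Eucl n → Eucl n)
    (g : Eucl n → EReal) (ξ : Eucl n) :
    epicomp G (interior (edom φ)) g ξ = ⨅ y ∈ {y : Eucl n | G y = ξ}, g y := by
  unfold epicomp
  rw [hint, Set.sep_univ]

end ConjLemmas
section LowerBounds

variable {n : ℕ} {φ : Eucl n → EReal} {p : Eucl n → ℝ}

private lemma ec_le_fiber {G : Eucl n → Eucl n} {g : Eucl n → EReal}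
    (hint : interior (edom φ) = Set.univ) {y ξ : Eucl n} (hy : G y = ξ) :
    epicomp G (interior (edom φ)) g ξ ≤ g y := by
  rw [ec_eq hint]; exact iInf_le_of_le y (iInf_le _ hy)

private lemma ec_top_of_empty {G : Eucl n → Eucl n} {g : Eucl n → EReal}
    (hint : interior (edom φ) = Set.univ) {ξ : Eucl n} (hfib : ¬ ∃ y, G y = ξ) :
    epicomp G (interior (edom φ)) g ξ = ⊤ := by
  rw [ec_eq hint]
  exact eq_top_iff.mpr (le_iInf₂ fun y hy => absurd ⟨y, hy⟩ hfib)

private lemma benvR_lower {G : Eucl n → Eucl n} {g : Eucl n → EReal}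
    (hint : interior (edom φ) = Set.univ) (hrep : ∀ x, φ x = (p x : EReal))
    (hconv : ConvexOn ℝ Set.univ p) (hgrad : ∀ x, HasGradientAt p (G x) x)
    (hgbot : ∀ y, g y ≠ ⊥) {l l' : ℝ} (hl' : 0 < l') (hll : l' < l)
    {x₀ : Eucl n} {Er : ℝ} (hEr : benvR φ G l g x₀ = (Er : EReal)) (x : Eucl n) :
    ((Er + l'⁻¹ * (p x - (l'/l) * p x₀
        - (1 - l'/l) * p ((1 - l'/l)⁻¹ • (x - (l'/l) • x₀))) : ℝ) : EReal)
      ≤ benvR φ G l' g x := by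
  have hl : 0 < l := hl'.trans hll
  set t := l'/l with ht
  have ht0 : 0 < t := div_pos hl' hl
  have ht1 : t < 1 := (div_lt_one hl).mpr hll
  set z := (1 - t)⁻¹ • (x - t • x₀) with hz
  rw [benvR_eq hint hrep]
  refine le_iInf fun y => ?_
  rcases ereal_cases (g y) (hgbot y) with htop | ⟨r, hr⟩
  · rw [htop, EReal.top_add_coe]; exact le_top
  · have hle : benvR φ G l g x₀
        ≤ g y + ((l⁻¹ * (p x₀ - p y - ⟪G y, x₀ - y⟫) : ℝ) : EReal) := by
      rw [benvR_eq hint hrep]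
      exact iInf_le (fun y => g y + ((l⁻¹ * (p x₀ - p y - ⟪G y, x₀ - y⟫) : ℝ) : EReal)) y
    rw [hEr, hr, ← EReal.coe_add, EReal.coe_le_coe_iff] at hle
    rw [hr, ← EReal.coe_add, EReal.coe_le_coe_iff]
    have hgm := grad_mono hconv (hgrad y) z
    have hvec : x - y - t • (x₀ - y) = (1 - t) • (z - y) := by
      have h7 : (1 - t) • z = x - t • x₀ :=
        smul_inv_smul₀ (by linarith : (1:ℝ) - t ≠ 0) _
      rw [smul_sub (1 - t) z y, h7]
      module
    have hinner : ⟪G y, x - y⟫ - t * ⟪G y, x₀ - y⟫ = (1 - t) * ⟪G y, z - y⟫ := by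
      rw [← real_inner_smul_right, ← inner_sub_right, hvec, real_inner_smul_right]
    have hgm' := mul_le_mul_of_nonneg_left hgm (by linarith : (0:ℝ) ≤ 1 - t)
    have hD : p x - t * p x₀ - (1 - t) * p z
        ≤ (p x - p y - ⟪G y, x - y⟫) - t * (p x₀ - p y - ⟪G y, x₀ - y⟫) := by
      nlinarith [hgm', hinner]
    have h5 := mul_le_mul_of_nonneg_left hD (inv_nonneg.mpr hl'.le)
    have htl : l'⁻¹ * t = l⁻¹ := by rw [ht]; field_simp
    have h6 : l'⁻¹ * ((p x - p y - ⟪G y, x - y⟫) - t * (p x₀ - p y - ⟪G y, x₀ - y⟫))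
        = l'⁻¹ * (p x - p y - ⟪G y, x - y⟫) - l⁻¹ * (p x₀ - p y - ⟪G y, x₀ - y⟫) := by
      rw [mul_sub, ← mul_assoc, htl]
    rw [h6] at h5
    linarith
  
private lemma ec_lower {G : Eucl n → Eucl n} {g : Eucl n → EReal}
    (hint : interior (edom φ) = Set.univ) (hrep : ∀ x, φ x = (p x : EReal))
    (hconv : ConvexOn ℝ Set.univ p) (hgrad : ∀ x, HasGradientAt p (G x) x)
    (hgbot : ∀ y, g y ≠ ⊥) {l : ℝ} {x₀ : Eucl n} {Er : ℝ}
    (hEr : benvR φ G l g x₀ = (Er : EReal)) {ξ : Eucl n} :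
    ∀ y, G y = ξ →
    ((Er - l⁻¹ * (p x₀ + (fconj φ ξ).toReal - ⟪x₀, ξ⟫) : ℝ) : EReal) ≤ g y := by
  intro y hy
  rcases ereal_cases (g y) (hgbot y) with htop | ⟨r, hr⟩
  · rw [htop]; exact le_top
  · rw [hr, EReal.coe_le_coe_iff]
    have hle : benvR φ G l g x₀
        ≤ g y + ((l⁻¹ * (p x₀ - p y - ⟪G y, x₀ - y⟫) : ℝ) : EReal) := by
      rw [benvR_eq hint hrep]
      exact iInf_le (fun y => g y + ((l⁻¹ * (p x₀ - p y - ⟪G y, x₀ - y⟫) : ℝ) : EReal)) y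
    rw [hEr, hr, ← EReal.coe_add, EReal.coe_le_coe_iff] at hle
    have hψ := fconj_fiber_toReal hconv hgrad hrep hy
    have h1 : ⟪G y, x₀ - y⟫ = ⟪x₀, ξ⟫ - ⟪y, ξ⟫ := by
      rw [hy, inner_sub_right, real_inner_comm ξ x₀, real_inner_comm ξ y]
    have h2 : p x₀ - p y - ⟪G y, x₀ - y⟫ = p x₀ + (fconj φ ξ).toReal - ⟪x₀, ξ⟫ := by
      rw [hψ, h1]; ring
    rw [h2] at hle
    linarith

private lemma ec_lower' {G : Eucl n → Eucl n} {g : Eucl n → EReal}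
    (hint : interior (edom φ) = Set.univ) (hrep : ∀ x, φ x = (p x : EReal))
    (hconv : ConvexOn ℝ Set.univ p) (hgrad : ∀ x, HasGradientAt p (G x) x)
    (hgbot : ∀ y, g y ≠ ⊥) {l : ℝ} {x₀ : Eucl n} {Er : ℝ}
    (hEr : benvR φ G l g x₀ = (Er : EReal)) {ξ : Eucl n} :
    ((Er - l⁻¹ * (p x₀ + (fconj φ ξ).toReal - ⟪x₀, ξ⟫) : ℝ) : EReal)
      ≤ epicomp G (interior (edom φ)) g ξ := by
  rw [ec_eq hint]
  exact le_iInf₂ (ec_lower hint hrep hconv hgrad hgbot hEr)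

end LowerBounds
section ThresholdAux

variable {n : ℕ} {φ : Eucl n → EReal} {p : Eucl n → ℝ}

private lemma ereal_real {a : EReal} (h1 : a ≠ ⊤) (h2 : a ≠ ⊥) :
    ∃ r : ℝ, a = (r : EReal) ∧ a.toReal = r :=
  ⟨a.toReal, (EReal.coe_toReal h1 h2).symm, rfl⟩

private lemma breg_fconj {φs : Eucl n → Eucl n} (hrep : ∀ x, φ x = (p x : EReal))
    {η : Eucl n} (hη : η ∈ interior (edom (fconj φ))) {ξ : Eucl n} (hξ : fconj φ ξ ≠ ⊤) :
    breg (fconj φ) φs ξ η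
      = (((fconj φ ξ).toReal - (fconj φ η).toReal - ⟪φs η, ξ - η⟫ : ℝ) : EReal) := by
  have hηt : fconj φ η ≠ ⊤ := interior_subset hη
  obtain ⟨rξ, hrξ, hrξ'⟩ := ereal_real hξ (fconj_ne_bot hrep ξ)
  obtain ⟨rη, hrη, hrη'⟩ := ereal_real hηt (fconj_ne_bot hrep η)
  unfold breg
  rw [if_pos hη, hrξ, hrη]
  simp only [EReal.toReal_coe]
  norm_cast

private lemma iSup_ofReal_le {S S' : Set ℝ}
    (h : ∀ l ∈ S', ∀ l' : ℝ, 0 < l' → l' < l → l' ∈ S) (hpos : ∀ l ∈ S', 0 < l) :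
    ⨆ l ∈ S', ENNReal.ofReal l ≤ ⨆ l ∈ S, ENNReal.ofReal l := by
  refine iSup₂_le fun l hl => ?_
  refine le_of_forall_lt fun c hc => ?_
  have hc' : c ≠ ⊤ := (hc.trans_le le_top).ne
  have hct : c.toReal < l := by
    rwa [ENNReal.lt_ofReal_iff_toReal_lt hc'] at hc
  have hctn : (0:ℝ) ≤ c.toReal := ENNReal.toReal_nonneg
  have hlp : 0 < l := hpos l hl
  set l' := (c.toReal + l) / 2 with hl'
  have h0 : 0 < l' := by rw [hl']; linarith
  have h1 : l' < l := by rw [hl']; linarith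
  have h2 : c < ENNReal.ofReal l' := by
    calc c = ENNReal.ofReal c.toReal := (ENNReal.ofReal_toReal hc').symm
    _ < ENNReal.ofReal l' := by
        rw [ENNReal.ofReal_lt_ofReal_iff h0]
        rw [hl']; linarith
  exact h2.trans_le (le_iSup₂ (f := fun (l : ℝ) (_ : l ∈ S) => ENNReal.ofReal l) l'
    (h l hl l' h0 h1))

private lemma lt_toReal_add_one (c : EReal) (h : c ≠ ⊤) :
    c < ((c.toReal + 1 : ℝ) : EReal) := by
  induction c using EReal.rec with
  | bot => exact EReal.bot_lt_coe _
  | coe r => exact_mod_cast by simp [EReal.toReal_coe]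
  | top => exact absurd rfl h

end ThresholdAux
set_option maxHeartbeats 1000000 in
/-- Suppose `dom φ = ℝⁿ` and `g : ℝⁿ → ℝ̄` is proper and right
`φ`-prox-bounded with threshold `λ̄_g`.  For every `λ ∈ (0, λ̄_g)`:
(i) `env*_λ g : ℝⁿ → ℝ` is real-valued and locally Lipschitz continuous;
(ii) if `φ` is Legendre then `(∇φ ▷ g)|_{dom φ*}` is (left) `φ*`-prox-bounded with the
same threshold `λ̄_g` (here `φs` is any gradient map making `φ*` a dgf);
(iii) `λ(∇φ ▷ g) + φ*` is 1-coercive, and it is lsc on all of `ℝⁿ` provided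
`(∇φ ▷ g)|_{dom φ*}` is lsc; for the latter it suffices that `g` be lsc and that either
`φ` be Legendre with `dom φ*` open, or `g` be coercive, or `φ` be 1-coercive. -/
theorem mainprop_right {n : ℕ} (φ : Eucl n → EReal) (φ' : Eucl n → Eucl n)
    (hφ : IsDGF φ φ') (hfull : edom φ = Set.univ)
    (g : Eucl n → EReal) (hproper : ProperOn Set.univ g)
    (lam : ℝ) (hlam : 0 < lam) (hthr : ENNReal.ofReal lam < pbThresholdR φ φ' g) :
    let ec : Eucl n → EReal := epicomp φ' (interior (edom φ)) g
    -- (i)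
    ((∀ x : Eucl n, benvR φ φ' lam g x ≠ ⊤ ∧ benvR φ φ' lam g x ≠ ⊥) ∧
      LocallyLipschitz (fun x => (benvR φ φ' lam g x).toReal)) ∧
    -- (ii)
    (Legendre φ φ' →
      ∀ φs : Eucl n → Eucl n, IsDGF (fconj φ) φs →
        (∃ μ : ℝ, 0 < μ ∧ ProxBddBelow (fconj φ) φs μ ec) ∧
        pbThreshold (fconj φ) φs ec = pbThresholdR φ φ' g) ∧
    -- (iii)
    (OneCoercive (fun ξ => (lam : EReal) * ec ξ + fconj φ ξ) ∧
      (LowerSemicontinuousOn ec (edom (fconj φ)) →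
        LowerSemicontinuous (fun ξ => (lam : EReal) * ec ξ + fconj φ ξ)) ∧
      (LowerSemicontinuous g →
        ((Legendre φ φ' ∧ IsOpen (edom (fconj φ))) ∨ CoerciveE g ∨ OneCoercive φ) →
        LowerSemicontinuousOn ec (edom (fconj φ)))) := by
  intro ec
  -- ### setup
  set p : Eucl n → ℝ := fun x => (φ x).toReal with hp
  have hnotop : ∀ x, φ x ≠ ⊤ := fun x => by
    have hx : x ∈ edom φ := by rw [hfull]; trivial
    exact hx
  have hrep : ∀ x, φ x = (p x : EReal) := fun x =>
    (EReal.coe_toReal (hnotop x) (hφ.ne_bot x)).symm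
  have hint : interior (edom φ) = Set.univ := by rw [hfull, interior_univ]
  have hgrad : ∀ x, HasGradientAt p (φ' x) x := fun x =>
    hφ.diff x (by rw [hint]; trivial)
  have hconv : ConvexOn ℝ Set.univ p := by
    refine ⟨convex_univ, fun x _ y _ a b ha hb hab => ?_⟩
    have h := hφ.convex x (Set.mem_univ x) y (Set.mem_univ y) a b ha hb hab
    rw [hrep, hrep, hrep, ← EReal.coe_mul, ← EReal.coe_mul, ← EReal.coe_add,
      EReal.coe_le_coe_iff] at h
    simpa using h
  have hgbot : ∀ y, g y ≠ ⊥ := fun y => hproper.2 y (Set.mem_univ y)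
  obtain ⟨y₀, -, hy₀⟩ := hproper.1
  obtain ⟨r₀, hr₀⟩ : ∃ r₀ : ℝ, g y₀ = (r₀ : EReal) := by
    rcases ereal_cases (g y₀) (hgbot y₀) with h | h
    · exact absurd h hy₀
    · exact h
  -- threshold witness
  obtain ⟨l, hmem, hlaml⟩ : ∃ l : ℝ,
      (0 < l ∧ ProxBddBelowR φ φ' l g) ∧ ENNReal.ofReal lam < ENNReal.ofReal l := by
    rw [pbThresholdR, lt_iSup_iff] at hthr
    obtain ⟨l, hl⟩ := hthr
    rw [lt_iSup_iff] at hl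
    obtain ⟨hml, hl2⟩ := hl
    exact ⟨l, hml, hl2⟩
  have hlpos := hmem.1
  obtain ⟨x₀, -, hx₀⟩ := hmem.2
  have hll : lam < l := (ENNReal.ofReal_lt_ofReal_iff hlpos).mp hlaml
  -- benvR at level l is finite at x₀
  have hne_top : ∀ (l'' : ℝ) (x : Eucl n), benvR φ φ' l'' g x ≠ ⊤ := by
    intro l'' x
    have hle : benvR φ φ' l'' g x
        ≤ g y₀ + ((l''⁻¹ * (p x - p y₀ - ⟪φ' y₀, x - y₀⟫) : ℝ) : EReal) := by
      rw [benvR_eq hint hrep]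
      exact iInf_le (fun y => g y + ((l''⁻¹ * (p x - p y - ⟪φ' y, x - y⟫) : ℝ) : EReal)) y₀
    rw [hr₀, ← EReal.coe_add] at hle
    exact ne_top_of_le_ne_top (EReal.coe_ne_top _) hle
  obtain ⟨Er, hEr⟩ : ∃ Er : ℝ, benvR φ φ' l g x₀ = (Er : EReal) := by
    rcases ereal_cases (benvR φ φ' l g x₀) hx₀ with h | h
    · exact absurd h (hne_top l x₀)
    · exact h
  -- finiteness of benvR for all parameters below l
  have hfin : ∀ (l'' : ℝ), 0 < l'' → l'' < l → ∀ x, ∃ b : ℝ,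
      benvR φ φ' l'' g x = (b : EReal) := by
    intro l'' h0 h1 x
    have hnbot : benvR φ φ' l'' g x ≠ ⊥ := by
      intro hbot
      have h9 := benvR_lower hint hrep hconv hgrad hgbot h0 h1 hEr x
      rw [hbot] at h9
      exact absurd (le_bot_iff.mp h9) (EReal.coe_ne_bot _)
    rcases ereal_cases (benvR φ φ' l'' g x) hnbot with h | h
    · exact absurd h (hne_top l'' x)
    · exact h
  refine ⟨⟨?_, ?_⟩, ?_, ?_, ?_, ?_⟩
  · -- (i) finiteness
    intro x
    obtain ⟨b, hb⟩ := hfin lam hlam hll x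
    rw [hb]
    exact ⟨EReal.coe_ne_top b, EReal.coe_ne_bot b⟩
  · -- (i) locally Lipschitz
    have hfinx : ∀ x, ∃ b : ℝ, benvR φ φ' lam g x = (b : EReal) := hfin lam hlam hll
    set e : Eucl n → ℝ := fun x => (benvR φ φ' lam g x).toReal with he
    have hecoe : ∀ x, benvR φ φ' lam g x = ((e x : ℝ) : EReal) := by
      intro x
      obtain ⟨b, hb⟩ := hfinx x
      rw [hb]
      have : e x = b := by rw [he]; simp [hb]
      rw [this]
    have hterm : ∀ (x y : Eucl n) (r : ℝ), g y = (r : EReal) →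
        e x ≤ r + lam⁻¹ * (p x - p y - ⟪φ' y, x - y⟫) := by
      intro x y r hr
      have hle : benvR φ φ' lam g x
          ≤ g y + ((lam⁻¹ * (p x - p y - ⟪φ' y, x - y⟫) : ℝ) : EReal) := by
        rw [benvR_eq hint hrep]
        exact iInf_le (fun y => g y + ((lam⁻¹ * (p x - p y - ⟪φ' y, x - y⟫) : ℝ) : EReal)) y
      rw [hecoe x, hr, ← EReal.coe_add, EReal.coe_le_coe_iff] at hle
      exact hle
    have hq : ConvexOn ℝ Set.univ (fun x => lam⁻¹ * p x - e x) := by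
      refine ⟨convex_univ, fun x1 _ x2 _ a b ha hb hab => ?_⟩
      simp only [smul_eq_mul]
      have key : ((a * e x1 + b * e x2
          + lam⁻¹ * (p (a • x1 + b • x2) - a * p x1 - b * p x2) : ℝ) : EReal)
          ≤ benvR φ φ' lam g (a • x1 + b • x2) := by
        rw [benvR_eq hint hrep]
        refine le_iInf fun y => ?_
        rcases ereal_cases (g y) (hgbot y) with htop | ⟨r, hr⟩
        · rw [htop, EReal.top_add_coe]; exact le_top
        · rw [hr, ← EReal.coe_add, EReal.coe_le_coe_iff]
          have h1a := mul_le_mul_of_nonneg_left (hterm x1 y r hr) ha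
          have h2b := mul_le_mul_of_nonneg_left (hterm x2 y r hr) hb
          have hv : (a • x1 + b • x2) - y = a • (x1 - y) + b • (x2 - y) := by
            have h8 : a • (x1 - y) + b • (x2 - y) = a • x1 + b • x2 - (a + b) • y := by
              module
            rw [h8, hab, one_smul]
          have hiv : ⟪φ' y, (a • x1 + b • x2) - y⟫
              = a * ⟪φ' y, x1 - y⟫ + b * ⟪φ' y, x2 - y⟫ := by
            rw [hv, inner_add_right, real_inner_smul_right, real_inner_smul_right]
          have habr : a * r + b * r = r := by rw [← add_mul, hab, one_mul]
          have habpy : a * (lam⁻¹ * p y) + b * (lam⁻¹ * p y) = lam⁻¹ * p y := by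
            rw [← add_mul, hab, one_mul]
          have hiv' : lam⁻¹ * ⟪φ' y, (a • x1 + b • x2) - y⟫
              = a * (lam⁻¹ * ⟪φ' y, x1 - y⟫) + b * (lam⁻¹ * ⟪φ' y, x2 - y⟫) := by
            rw [hiv]; ring
          nlinarith [h1a, h2b, hiv', habr, habpy]
      rw [hecoe, EReal.coe_le_coe_iff] at key
      nlinarith [key]
    have hpc : ConvexOn ℝ Set.univ (fun x => lam⁻¹ * p x) := by
      have := hconv.smul (inv_nonneg.mpr hlam.le)
      simpa [smul_eq_mul] using this
    have hLip1 : LocallyLipschitz (fun x => lam⁻¹ * p x) :=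
      locallyLipschitzOn_univ.mp (hpc.locallyLipschitzOn isOpen_univ)
    have hLip2 : LocallyLipschitz (fun x => lam⁻¹ * p x - e x) :=
      locallyLipschitzOn_univ.mp (hq.locallyLipschitzOn isOpen_univ)
    have hLipe : LocallyLipschitz (fun x => lam⁻¹ * p x - (lam⁻¹ * p x - e x)) := by
      intro x
      obtain ⟨K1, t1, ht1, h1⟩ := hLip1 x
      obtain ⟨K2, t2, ht2, h2⟩ := hLip2 x
      exact ⟨K1 + K2, t1 ∩ t2, inter_mem ht1 ht2,
        (h1.mono Set.inter_subset_left).sub (h2.mono Set.inter_subset_right)⟩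
    have heq : (fun x => lam⁻¹ * p x - (lam⁻¹ * p x - e x)) = e := by funext x; ring
    rw [heq] at hLipe
    exact hLipe
  · -- (ii)
    intro _hLeg φs hψ
    have dir1 : ∀ l1 l2 : ℝ, 0 < l2 → l2 < l1 → ProxBddBelowR φ φ' l1 g →
        ProxBddBelow (fconj φ) φs l2 ec := by
      intro l1 l2 hl2 hl21 hpb
      obtain ⟨x1, -, hx1⟩ := hpb
      obtain ⟨E1, hE1, -⟩ := ereal_real (hne_top l1 x1) hx1
      obtain ⟨η, hη⟩ := hψ.int_nonempty
      have hηt : fconj φ η ≠ ⊤ := interior_subset hη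
      have hc₀ : (0:ℝ) < l2⁻¹ - l1⁻¹ := by
        have h9 : l1⁻¹ < l2⁻¹ := by
          rw [inv_lt_inv₀ (hl2.trans hl21) hl2]
          exact hl21
        linarith
      set c₀ := l2⁻¹ - l1⁻¹ with hc₀def
      set w := l2⁻¹ • φs η - l1⁻¹ • x1 with hw
      set β := E1 - l1⁻¹ * p x1 - l2⁻¹ * (fconj φ η).toReal + l2⁻¹ * ⟪φs η, η⟫
        - c₀ * p (c₀⁻¹ • w) with hβ
      have hlow : ((β : ℝ) : EReal) ≤ benv (fconj φ) φs l2 ec η := by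
        unfold benv
        refine le_iInf₂ fun ξ hξ => ?_
        have hξt : fconj φ ξ ≠ ⊤ := hξ
        rw [breg_fconj hrep hη hξt, ← EReal.coe_mul]
        by_cases hfib : ∃ y, φ' y = ξ
        · have hec : ((E1 - l1⁻¹ * (p x1 + (fconj φ ξ).toReal - ⟪x1, ξ⟫) : ℝ) : EReal)
              ≤ ec ξ := ec_lower' hint hrep hconv hgrad hgbot hE1
          refine le_trans ?_ (add_le_add_left hec _)
          rw [← EReal.coe_add, EReal.coe_le_coe_iff]
          have hcb := fconj_coercive_bd hrep hc₀ w hξt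
          have hwi : ⟪w, ξ⟫ = l2⁻¹ * ⟪φs η, ξ⟫ - l1⁻¹ * ⟪x1, ξ⟫ := by
            rw [hw, inner_sub_left, real_inner_smul_left, real_inner_smul_left]
          have hie : ⟪φs η, ξ - η⟫ = ⟪φs η, ξ⟫ - ⟪φs η, η⟫ := inner_sub_right _ _ _
          have hc₀ψ : c₀ * (fconj φ ξ).toReal
              = l2⁻¹ * (fconj φ ξ).toReal - l1⁻¹ * (fconj φ ξ).toReal := by
            rw [hc₀def]; ring
          have hie2 : l2⁻¹ * ⟪φs η, ξ - η⟫ = l2⁻¹ * ⟪φs η, ξ⟫ - l2⁻¹ * ⟪φs η, η⟫ := by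
            rw [hie]; ring
          rw [hβ]
          linarith [hcb, hwi, hc₀ψ, hie2]
        · have : ec ξ = ⊤ := ec_top_of_empty hint hfib
          rw [this, EReal.top_add_coe]
          exact le_top
      refine ⟨η, hη, fun hbot => ?_⟩
      rw [hbot] at hlow
      exact absurd (le_bot_iff.mp hlow) (EReal.coe_ne_bot _)
    have dir2 : ∀ l1 l2 : ℝ, 0 < l2 → l2 < l1 → ProxBddBelow (fconj φ) φs l1 ec →
        ProxBddBelowR φ φ' l2 g := by
      intro l1 l2 hl2 hl21 hpb
      obtain ⟨η, hη, hF⟩ := hpb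
      have hηt : fconj φ η ≠ ⊤ := interior_subset hη
      have hξ₀t : fconj φ (φ' y₀) ≠ ⊤ := fconj_fiber_dom hconv hgrad hrep rfl
      have hFle2 : benv (fconj φ) φs l1 ec η
          ≤ ((r₀ + l1⁻¹ * ((fconj φ (φ' y₀)).toReal - (fconj φ η).toReal
              - ⟪φs η, φ' y₀ - η⟫) : ℝ) : EReal) := by
        have hFle : benv (fconj φ) φs l1 ec η
            ≤ ec (φ' y₀) + ((l1⁻¹ : ℝ) : EReal) * breg (fconj φ) φs (φ' y₀) η := by
          unfold benv
          exact iInf_le_of_le (φ' y₀) (iInf_le _ hξ₀t)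
        refine hFle.trans ?_
        rw [breg_fconj hrep hη hξ₀t, ← EReal.coe_mul, EReal.coe_add]
        refine add_le_add_left ?_ _
        exact le_trans (ec_le_fiber hint rfl) (le_of_eq hr₀)
      obtain ⟨F, hFr, -⟩ :=
        ereal_real (ne_top_of_le_ne_top (EReal.coe_ne_top _) hFle2) hF
      have hc₀ : (0:ℝ) < l2⁻¹ - l1⁻¹ := by
        have h9 : l1⁻¹ < l2⁻¹ := by
          rw [inv_lt_inv₀ (hl2.trans hl21) hl2]
          exact hl21
        linarith
      set c₀ := l2⁻¹ - l1⁻¹ with hc₀def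
      set w := -(l1⁻¹ • φs η) with hw
      set β := F + l2⁻¹ * p 0 + l1⁻¹ * (fconj φ η).toReal - l1⁻¹ * ⟪φs η, η⟫
        - c₀ * p (c₀⁻¹ • w) with hβ
      refine ⟨0, by rw [hfull]; trivial, fun hbot => ?_⟩
      have hlow : ((β : ℝ) : EReal) ≤ benvR φ φ' l2 g 0 := by
        rw [benvR_eq hint hrep]
        refine le_iInf fun y => ?_
        rcases ereal_cases (g y) (hgbot y) with htop | ⟨r, hr⟩
        · rw [htop, EReal.top_add_coe]; exact le_top
        · rw [hr, ← EReal.coe_add, EReal.coe_le_coe_iff]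
          have hξt : fconj φ (φ' y) ≠ ⊤ := fconj_fiber_dom hconv hgrad hrep rfl
          have hψξ : (fconj φ (φ' y)).toReal = ⟪y, φ' y⟫ - p y :=
            fconj_fiber_toReal hconv hgrad hrep rfl
          have h2 : ((F : ℝ) : EReal) ≤ ec (φ' y)
              + ((l1⁻¹ * ((fconj φ (φ' y)).toReal - (fconj φ η).toReal
                - ⟪φs η, φ' y - η⟫) : ℝ) : EReal) := by
            rw [← hFr]
            unfold benv
            refine le_trans (iInf_le_of_le (φ' y) (iInf_le _ hξt)) ?_
            rw [breg_fconj hrep hη hξt, ← EReal.coe_mul]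
          have h3 : ec (φ' y) ≤ ((r : ℝ) : EReal) :=
            le_trans (ec_le_fiber hint rfl) (le_of_eq hr)
          have h4 : F ≤ r + l1⁻¹ * ((fconj φ (φ' y)).toReal - (fconj φ η).toReal
              - ⟪φs η, φ' y - η⟫) := by
            have h5 := h2.trans (add_le_add_left h3 _)
            rw [← EReal.coe_add, EReal.coe_le_coe_iff] at h5
            exact h5
          have hcb := fconj_coercive_bd hrep hc₀ w hξt
          have hwi : ⟪w, φ' y⟫ = -(l1⁻¹ * ⟪φs η, φ' y⟫) := by
            rw [hw, inner_neg_left, real_inner_smul_left]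
          have hie : ⟪φs η, φ' y - η⟫ = ⟪φs η, φ' y⟫ - ⟪φs η, η⟫ := inner_sub_right _ _ _
          have hinz : ⟪φ' y, (0 : Eucl n) - y⟫ = -⟪y, φ' y⟫ := by
            rw [zero_sub, inner_neg_right, real_inner_comm]
          have hc₀ψ : c₀ * (fconj φ (φ' y)).toReal
              = l2⁻¹ * (fconj φ (φ' y)).toReal - l1⁻¹ * (fconj φ (φ' y)).toReal := by
            rw [hc₀def]; ring
          have hψξ2 : l2⁻¹ * (fconj φ (φ' y)).toReal = l2⁻¹ * ⟪y, φ' y⟫ - l2⁻¹ * p y := by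
            rw [hψξ]; ring
          have hie1 : l1⁻¹ * ⟪φs η, φ' y - η⟫
              = l1⁻¹ * ⟪φs η, φ' y⟫ - l1⁻¹ * ⟪φs η, η⟫ := by
            rw [hie]; ring
          have hinz2 : l2⁻¹ * ⟪φ' y, (0 : Eucl n) - y⟫ = -(l2⁻¹ * ⟪y, φ' y⟫) := by
            rw [hinz]; ring
          rw [hβ]
          linarith [hcb, hwi, h4, hc₀ψ, hψξ2, hie1, hinz2]
      rw [hbot] at hlow
      exact absurd (le_bot_iff.mp hlow) (EReal.coe_ne_bot _)
    constructor
    · exact ⟨lam, hlam, dir1 l lam hlam hll hmem.2⟩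
    · unfold pbThreshold pbThresholdR
      apply le_antisymm
      · refine iSup_ofReal_le (fun l1 hl1 l2 h0 h1 => ?_) (fun l1 hl1 => hl1.1)
        exact ⟨h0, dir2 l1 l2 h0 h1 hl1.2⟩
      · refine iSup_ofReal_le (fun l1 hl1 l2 h0 h1 => ?_) (fun l1 hl1 => hl1.1)
        exact ⟨h0, dir1 l1 l2 h0 h1 hl1.2⟩
  · -- (iii) 1-coercive
    have hec_def : ec = epicomp φ' (interior (edom φ)) g := rfl
    have hpcont : Continuous p :=
      (locallyLipschitzOn_univ.mp (hconv.locallyLipschitzOn isOpen_univ)).continuous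
    have ht0 : 0 < lam / l := div_pos hlam hlpos
    have ht1 : lam / l < 1 := (div_lt_one hlpos).mpr hll
    have hHtop : ∀ ξ : Eucl n, (¬ ∃ y, φ' y = ξ) →
        (lam : EReal) * ec ξ + fconj φ ξ = ⊤ := by
      intro ξ hfib
      rw [hec_def, ec_top_of_empty hint hfib, EReal.coe_mul_top_of_pos hlam,
        EReal.top_add_of_ne_bot (fconj_ne_bot hrep ξ)]
    have hmaster : ∀ ξ : Eucl n, (∃ y, φ' y = ξ) →
        ((lam * Er - (lam/l) * p x₀ + (lam/l) * ⟪x₀, ξ⟫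
          + (1 - lam/l) * (fconj φ ξ).toReal : ℝ) : EReal)
          ≤ (lam : EReal) * ec ξ + fconj φ ξ := by
      intro ξ hfib
      obtain ⟨y, hy⟩ := hfib
      have hξt : fconj φ ξ ≠ ⊤ := fconj_fiber_dom hconv hgrad hrep hy
      have hec : ((Er - l⁻¹ * (p x₀ + (fconj φ ξ).toReal - ⟪x₀, ξ⟫) : ℝ) : EReal) ≤ ec ξ :=
        ec_lower' hint hrep hconv hgrad hgbot hEr
      have h1 : (lam : EReal)
            * ((Er - l⁻¹ * (p x₀ + (fconj φ ξ).toReal - ⟪x₀, ξ⟫) : ℝ) : EReal)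
          ≤ (lam : EReal) * ec ξ :=
        mul_le_mul_of_nonneg_left hec (by exact_mod_cast hlam.le)
      rw [← EReal.coe_mul] at h1
      have h2 := add_le_add_left h1 (fconj φ ξ)
      refine le_trans (le_of_eq ?_) h2
      obtain ⟨ψv, hψv, hψv'⟩ := ereal_real hξt (fconj_ne_bot hrep ξ)
      rw [hψv', hψv, ← EReal.coe_add, EReal.coe_eq_coe_iff]
      field_simp
      ring
    intro M
    set K := (M + 1 + (lam/l) * ‖x₀‖) / (1 - lam/l) with hK
    obtain ⟨zmax, -, hzmax⟩ := (isCompact_closedBall (0 : Eucl n) |K|).exists_isMaxOn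
      ⟨0, by simp⟩ hpcont.continuousOn
    set C := p zmax with hC
    set c₁ := lam * Er - (lam/l) * p x₀ - (1 - lam/l) * C with hc₁
    refine ⟨max 1 |c₁|, fun ξ hξ => ?_⟩
    show ((M * ‖ξ‖ : ℝ) : EReal) ≤ (lam : EReal) * ec ξ + fconj φ ξ
    by_cases hfib : ∃ y, φ' y = ξ
    · refine le_trans ?_ (hmaster ξ hfib)
      rw [EReal.coe_le_coe_iff]
      obtain ⟨y, hy⟩ := hfib
      have hξt : fconj φ ξ ≠ ⊤ := fconj_fiber_dom hconv hgrad hrep hy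
      have hξ0 : ξ ≠ 0 := by
        intro h0
        rw [h0, norm_zero] at hξ
        have := le_trans (le_max_left 1 |c₁|) hξ
        linarith
      have hnξ : 0 < ‖ξ‖ := norm_pos_iff.mpr hξ0
      set x := K • ‖ξ‖⁻¹ • ξ with hx
      have h9 : ‖x‖ = |K| := by
        rw [hx, norm_smul, norm_smul, norm_inv, norm_norm, inv_mul_cancel₀ hnξ.ne',
          mul_one, Real.norm_eq_abs]
      have hxp : p x ≤ C :=
        hzmax (by rw [Metric.mem_closedBall, dist_zero_right, h9])
      have hxi : ⟪x, ξ⟫ = K * ‖ξ‖ := by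
        rw [hx, real_inner_smul_left, real_inner_smul_left, real_inner_self_eq_norm_sq]
        field_simp
      have hψ : K * ‖ξ‖ - C ≤ (fconj φ ξ).toReal := by
        have h10 := fconj_toReal_ge hrep x hξt
        linarith [hxi ▸ h10]
      have hx₀i : -(‖x₀‖ * ‖ξ‖) ≤ ⟪x₀, ξ⟫ := by
        have h11 := abs_real_inner_le_norm x₀ ξ
        have h12 := neg_abs_le ⟪x₀, ξ⟫
        linarith
      have hKey : (1 - lam/l) * K = M + 1 + (lam/l) * ‖x₀‖ := by
        rw [hK, mul_comm, div_mul_cancel₀ _ (ne_of_gt (show (0:ℝ) < 1 - lam/l by linarith))]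
      have h5 := mul_le_mul_of_nonneg_left hx₀i ht0.le
      have h6 := mul_le_mul_of_nonneg_left hψ (by linarith : (0:ℝ) ≤ 1 - lam/l)
      have h7 : (1 - lam/l) * (K * ‖ξ‖) = (M + 1 + (lam/l) * ‖x₀‖) * ‖ξ‖ := by
        calc (1 - lam/l) * (K * ‖ξ‖) = ((1 - lam/l) * K) * ‖ξ‖ := by ring
        _ = (M + 1 + (lam/l) * ‖x₀‖) * ‖ξ‖ := by rw [hKey]
      have h8 : |c₁| ≤ ‖ξ‖ := le_trans (le_max_right 1 |c₁|) hξ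
      have h13 := neg_abs_le c₁
      have hA : (M + 1 + lam/l * ‖x₀‖) * ‖ξ‖ - (1 - lam/l) * C
          ≤ (1 - lam/l) * (fconj φ ξ).toReal := by linarith [h6, h7]
      rw [hc₁] at h8 h13
      linarith [hA, h5, h8, h13]
    · rw [hHtop ξ hfib]
      exact le_top
  · -- (iii) lsc of sum
    intro hlsc
    have hec_def : ec = epicomp φ' (interior (edom φ)) g := rfl
    have ht1' : 0 < 1 - lam/l := by
      have := (div_lt_one hlpos).mpr hll; linarith
    have ht0 : 0 < lam / l := div_pos hlam hlpos
    have hHtop : ∀ ξ : Eucl n, (¬ ∃ y, φ' y = ξ) →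
        (lam : EReal) * ec ξ + fconj φ ξ = ⊤ := by
      intro ξ hfib
      rw [hec_def, ec_top_of_empty hint hfib, EReal.coe_mul_top_of_pos hlam,
        EReal.top_add_of_ne_bot (fconj_ne_bot hrep ξ)]
    have hmaster : ∀ ξ : Eucl n, (∃ y, φ' y = ξ) →
        ((lam * Er - (lam/l) * p x₀ + (lam/l) * ⟪x₀, ξ⟫
          + (1 - lam/l) * (fconj φ ξ).toReal : ℝ) : EReal)
          ≤ (lam : EReal) * ec ξ + fconj φ ξ := by
      intro ξ hfib
      obtain ⟨y, hy⟩ := hfib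
      have hξt : fconj φ ξ ≠ ⊤ := fconj_fiber_dom hconv hgrad hrep hy
      have hec : ((Er - l⁻¹ * (p x₀ + (fconj φ ξ).toReal - ⟪x₀, ξ⟫) : ℝ) : EReal) ≤ ec ξ :=
        ec_lower' hint hrep hconv hgrad hgbot hEr
      have h1 : (lam : EReal)
            * ((Er - l⁻¹ * (p x₀ + (fconj φ ξ).toReal - ⟪x₀, ξ⟫) : ℝ) : EReal)
          ≤ (lam : EReal) * ec ξ :=
        mul_le_mul_of_nonneg_left hec (by exact_mod_cast hlam.le)
      rw [← EReal.coe_mul] at h1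
      have h2 := add_le_add_left h1 (fconj φ ξ)
      refine le_trans (le_of_eq ?_) h2
      obtain ⟨ψv, hψv, hψv'⟩ := ereal_real hξt (fconj_ne_bot hrep ξ)
      rw [hψv', hψv, ← EReal.coe_add, EReal.coe_eq_coe_iff]
      field_simp
      ring
    have hψlsc : LowerSemicontinuous (fconj φ) := by
      have hrw : fconj φ = fun ξ => ⨆ x : Eucl n, ((⟪x, ξ⟫ - p x : ℝ) : EReal) := by
        funext ξ; exact fconj_eq hrep ξ
      rw [hrw]
      apply lowerSemicontinuous_iSup
      intro x
      apply Continuous.lowerSemicontinuous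
      exact continuous_coe_real_ereal.comp
        ((continuous_const.inner continuous_id).sub continuous_const)
    intro ξ₀ c hc
    simp only at hc
    have hcnetop : c ≠ ⊤ := (hc.trans_le le_top).ne
    by_cases hdom : fconj φ ξ₀ = ⊤
    · -- outside dom φ*
      set r := c.toReal + 1 with hrdef
      have hcr : c < (r : EReal) := lt_toReal_add_one c hcnetop
      set Kc := (r - (lam * Er - (lam/l) * p x₀) + (lam/l) * ‖x₀‖ * (‖ξ₀‖ + 1))
          / (1 - lam/l) with hKc
      have hev1 : ∀ᶠ ξ in 𝓝 ξ₀, (Kc : EReal) < fconj φ ξ :=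
        hψlsc ξ₀ (Kc : EReal) (by show (Kc : EReal) < fconj φ ξ₀; rw [hdom]; exact EReal.coe_lt_top _)
      have hev2 : ∀ᶠ ξ in 𝓝 ξ₀, ξ ∈ Metric.ball ξ₀ 1 :=
        Metric.ball_mem_nhds ξ₀ one_pos
      filter_upwards [hev1, hev2] with ξ h1 h2
      show c < (lam : EReal) * ec ξ + fconj φ ξ
      by_cases hfib : ∃ y, φ' y = ξ
      · refine hcr.trans_le (le_trans (EReal.coe_le_coe_iff.mpr ?_) (hmaster ξ hfib))
        obtain ⟨y, hy⟩ := hfib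
        have hξt : fconj φ ξ ≠ ⊤ := fconj_fiber_dom hconv hgrad hrep hy
        have hψv : Kc < (fconj φ ξ).toReal := by
          rw [fconj_coe hrep hξt] at h1
          exact_mod_cast h1
        have hnb : ‖ξ‖ ≤ ‖ξ₀‖ + 1 := by
          have h14 : dist ξ ξ₀ < 1 := Metric.mem_ball.mp h2
          rw [dist_eq_norm] at h14
          have h15 := norm_sub_norm_le ξ ξ₀
          linarith
        have hi : -(‖x₀‖ * ‖ξ‖) ≤ ⟪x₀, ξ⟫ := by
          have h11 := abs_real_inner_le_norm x₀ ξ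
          have h12 := neg_abs_le ⟪x₀, ξ⟫
          linarith
        have hKceq : (1 - lam/l) * Kc
            = r - (lam * Er - (lam/l) * p x₀) + (lam/l) * ‖x₀‖ * (‖ξ₀‖ + 1) := by
          rw [hKc, mul_comm, div_mul_cancel₀ _ (ne_of_gt ht1')]
        have h5 := mul_le_mul_of_nonneg_left hi ht0.le
        have h6 := mul_le_mul_of_nonneg_left hψv.le ht1'.le
        have h5b : (lam/l) * (‖x₀‖ * ‖ξ‖) ≤ (lam/l) * (‖x₀‖ * (‖ξ₀‖ + 1)) :=
          mul_le_mul_of_nonneg_left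
            (mul_le_mul_of_nonneg_left hnb (norm_nonneg x₀)) ht0.le
        linarith [h5, h6, h5b, hKceq]
      · rw [hHtop ξ hfib]
        exact lt_top_iff_ne_top.mpr hcnetop
    · -- ξ₀ ∈ dom φ*
      have hξ₀bot := fconj_ne_bot hrep ξ₀
      obtain ⟨ψ0, hψ0, hψ0'⟩ := ereal_real hdom hξ₀bot
      have hecnb : ec ξ₀ ≠ ⊥ := by
        by_cases hfib : ∃ y, φ' y = ξ₀
        · intro hbot
          have h16 : ((Er - l⁻¹ * (p x₀ + (fconj φ ξ₀).toReal - ⟪x₀, ξ₀⟫) : ℝ) : EReal)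
              ≤ ec ξ₀ := ec_lower' hint hrep hconv hgrad hgbot hEr
          rw [hbot] at h16
          exact absurd (le_bot_iff.mp h16) (EReal.coe_ne_bot _)
        · intro hbot
          rw [hec_def, ec_top_of_empty hint hfib] at hbot
          exact absurd hbot (by simp)
      obtain ⟨K, M, hK, hM, hcKM⟩ : ∃ K M : ℝ, (K : EReal) < ec ξ₀
          ∧ (M : EReal) < fconj φ ξ₀ ∧ c < ((lam * K + M : ℝ) : EReal) := by
        rcases ereal_cases (ec ξ₀) hecnb with htop2 | ⟨e₀, he₀⟩
        · refine ⟨(c.toReal + 1 - (ψ0 - 1)) / lam, ψ0 - 1, ?_, ?_, ?_⟩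
          · rw [htop2]; exact EReal.coe_lt_top _
          · rw [hψ0]; exact_mod_cast (by linarith : ψ0 - 1 < ψ0)
          · have h9 : lam * ((c.toReal + 1 - (ψ0 - 1)) / lam) + (ψ0 - 1)
                = c.toReal + 1 := by field_simp; ring
            rw [h9]
            exact lt_toReal_add_one c hcnetop
        · have hcc : c < ((lam * e₀ + ψ0 : ℝ) : EReal) := by
            rw [he₀, hψ0, ← EReal.coe_mul, ← EReal.coe_add] at hc
            exact hc
          obtain ⟨cr, hcr1, hcr2⟩ : ∃ cr : ℝ, c ≤ (cr : EReal) ∧ cr < lam * e₀ + ψ0 := by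
            induction c using EReal.rec with
            | bot => exact ⟨lam * e₀ + ψ0 - 1, bot_le, by linarith⟩
            | coe cc => exact ⟨cc, le_refl _, by exact_mod_cast hcc⟩
            | top => exact absurd rfl hcnetop
          set d := lam * e₀ + ψ0 - cr with hd
          have hd0 : 0 < d := by rw [hd]; linarith
          refine ⟨e₀ - d / (4 * lam), ψ0 - d / 4, ?_, ?_, ?_⟩
          · rw [he₀]
            have : e₀ - d / (4 * lam) < e₀ := by
              have : 0 < d / (4 * lam) := by positivity
              linarith
            exact_mod_cast this
          · rw [hψ0]
            have : ψ0 - d / 4 < ψ0 := by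
              have : 0 < d / 4 := by positivity
              linarith
            exact_mod_cast this
          · refine lt_of_le_of_lt hcr1 ?_
            have h17 : lam * (e₀ - d / (4 * lam)) + (ψ0 - d / 4)
                = lam * e₀ + ψ0 - d / 2 := by
              field_simp
              ring
            rw [h17]
            exact_mod_cast (by linarith : cr < lam * e₀ + ψ0 - d / 2)
      have hev1 := hlsc ξ₀ hdom (K : EReal) hK
      obtain ⟨V, hVopen, hVξ₀, hV⟩ := mem_nhdsWithin.mp hev1
      have hev2 : ∀ᶠ ξ in 𝓝 ξ₀, (M : EReal) < fconj φ ξ := hψlsc ξ₀ (M : EReal) hM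
      filter_upwards [hev2, hVopen.mem_nhds hVξ₀] with ξ h2 h3
      show c < (lam : EReal) * ec ξ + fconj φ ξ
      by_cases hξdom : fconj φ ξ = ⊤
      · have hfib : ¬ ∃ y, φ' y = ξ := fun ⟨y, hy⟩ =>
          (fconj_fiber_dom hconv hgrad hrep hy) hξdom
        rw [hHtop ξ hfib]
        exact lt_top_iff_ne_top.mpr hcnetop
      · have hKec : (K : EReal) < ec ξ := hV ⟨h3, hξdom⟩
        refine hcKM.trans_le ?_
        have ha : ((lam * K : ℝ) : EReal) ≤ (lam : EReal) * ec ξ := by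
          rw [EReal.coe_mul]
          exact mul_le_mul_of_nonneg_left hKec.le (by exact_mod_cast hlam.le)
        rw [EReal.coe_add]
        exact add_le_add ha h2.le
  · -- (iii) lsc of ec
    intro hglsc hcases
    have hec_def : ec = epicomp φ' (interior (edom φ)) g := rfl
    have hpcont : Continuous p :=
      (locallyLipschitzOn_univ.mp (hconv.locallyLipschitzOn isOpen_univ)).continuous
    intro ξ₀ hξ₀ b hb
    have hξ₀t : fconj φ ξ₀ ≠ ⊤ := hξ₀
    obtain ⟨r, hbr, hrec⟩ : ∃ r : ℝ, b < (r : EReal) ∧ (r : EReal) < ec ξ₀ :=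
      EReal.exists_between_coe_real hb
    by_contra hcon
    rw [Filter.not_eventually] at hcon
    have hseq : ∀ k : ℕ, ∃ y : Eucl n,
        ‖φ' y - ξ₀‖ < 1 / ((k : ℝ) + 1) ∧ g y < (r : EReal) := by
      intro k
      have hball : Metric.ball ξ₀ (1 / ((k : ℝ) + 1)) ∈ 𝓝 ξ₀ :=
        Metric.ball_mem_nhds _ (by positivity)
      have hU : ∀ᶠ ξ in 𝓝[edom (fconj φ)] ξ₀, ξ ∈ Metric.ball ξ₀ (1 / ((k : ℝ) + 1)) :=
        mem_nhdsWithin_of_mem_nhds hball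
      obtain ⟨ξ, hξ1, hξ2⟩ := (hcon.and_eventually hU).exists
      have hlt : ec ξ < (r : EReal) := lt_of_le_of_lt (not_lt.mp hξ1) hbr
      rw [hec_def, ec_eq hint] at hlt
      rw [iInf_lt_iff] at hlt
      obtain ⟨y, hy⟩ := hlt
      rw [iInf_lt_iff] at hy
      obtain ⟨hyf, hylt⟩ := hy
      refine ⟨y, ?_, hylt⟩
      rw [show φ' y = ξ from hyf, ← dist_eq_norm]
      exact Metric.mem_ball.mp hξ2
    choose Y hY1 hY2 using hseq
    have hYtend : Tendsto (fun k : ℕ => φ' (Y k)) atTop (𝓝 ξ₀) := by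
      rw [tendsto_iff_dist_tendsto_zero]
      refine squeeze_zero (fun k => dist_nonneg) (fun k => ?_)
        tendsto_one_div_add_atTop_nhds_zero_nat
      rw [dist_eq_norm]
      exact (hY1 k).le
    by_cases hbdd : ∃ R : ℝ, ∀ k, ‖Y k‖ ≤ R
    · -- bounded case
      obtain ⟨R, hR⟩ := hbdd
      have hsub : ∀ k, Y k ∈ Metric.closedBall (0 : Eucl n) R := fun k => by
        rw [Metric.mem_closedBall, dist_zero_right]; exact hR k
      obtain ⟨y₁, -, σ, hσ, hYσ⟩ :=
        tendsto_subseq_of_bounded (Metric.isBounded_closedBall (x := (0 : Eucl n)) (r := R))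
          hsub
      have h1 : Tendsto (fun k => Y (σ k)) atTop (𝓝 y₁) := hYσ
      have h2 : Tendsto (fun k => φ' (Y (σ k))) atTop (𝓝 ξ₀) :=
        hYtend.comp hσ.tendsto_atTop
      have hsubgrad : ∀ z, p y₁ + ⟪ξ₀, z - y₁⟫ ≤ p z := by
        intro z
        have hk : ∀ k, p (Y (σ k)) + ⟪φ' (Y (σ k)), z - Y (σ k)⟫ ≤ p z :=
          fun k => grad_mono hconv (hgrad _) z
        have hlim : Tendsto (fun k => p (Y (σ k)) + ⟪φ' (Y (σ k)), z - Y (σ k)⟫) atTop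
            (𝓝 (p y₁ + ⟪ξ₀, z - y₁⟫)) :=
          ((hpcont.tendsto y₁).comp h1).add (h2.inner (tendsto_const_nhds.sub h1))
        exact le_of_tendsto hlim (Filter.Eventually.of_forall hk)
      have hgy₁ : ξ₀ = φ' y₁ := grad_unique hsubgrad (hgrad y₁)
      have hgy : g y₁ ≤ (r : EReal) := by
        by_contra hgt
        push_neg at hgt
        have hev := hglsc y₁ (r : EReal) hgt
        obtain ⟨k, hk⟩ := (h1.eventually hev).exists
        exact absurd (hY2 (σ k)) (not_lt.mpr hk.le)
      have hle : ec ξ₀ ≤ g y₁ := by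
        rw [hec_def]; exact ec_le_fiber hint hgy₁.symm
      exact absurd hrec (not_lt.mpr (hle.trans hgy))
    · -- unbounded case
      push_neg at hbdd
      rcases hcases with ⟨-, hopen⟩ | hcoer | h1c
      · -- dom φ* open
        obtain ⟨ε3, hε3, hball3⟩ := Metric.isOpen_iff.mp hopen ξ₀ hξ₀
        set ε := ε3 / 3 with hεdef
        have hε : 0 < ε := by rw [hεdef]; linarith
        have hsub2 : Metric.closedBall ξ₀ (2 * ε) ⊆ Metric.ball ξ₀ ε3 := by
          intro ζ hζ
          rw [Metric.mem_closedBall] at hζ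
          rw [Metric.mem_ball]
          rw [hεdef] at hζ
          linarith
        have hψconvE : ∀ (ζ1 ζ2 : Eucl n) (a b : ℝ), 0 ≤ a → 0 ≤ b → a + b = 1 →
            fconj φ (a • ζ1 + b • ζ2)
              ≤ (a : EReal) * fconj φ ζ1 + (b : EReal) * fconj φ ζ2 := by
          intro ζ1 ζ2 a b ha hb hab
          rw [fconj_eq hrep]
          refine iSup_le fun x => ?_
          have hc1 : ((⟪x, ζ1⟫ - p x : ℝ) : EReal) ≤ fconj φ ζ1 := fconj_ge hrep x ζ1
          have hc2 : ((⟪x, ζ2⟫ - p x : ℝ) : EReal) ≤ fconj φ ζ2 := fconj_ge hrep x ζ2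
          have h3 : (⟪x, a • ζ1 + b • ζ2⟫ - p x : ℝ)
              = a * (⟪x, ζ1⟫ - p x) + b * (⟪x, ζ2⟫ - p x) := by
            rw [inner_add_right, real_inner_smul_right, real_inner_smul_right]
            linear_combination (p x) * hab
          rw [h3, EReal.coe_add, EReal.coe_mul, EReal.coe_mul]
          exact add_le_add (mul_le_mul_of_nonneg_left hc1 (by exact_mod_cast ha))
            (mul_le_mul_of_nonneg_left hc2 (by exact_mod_cast hb))
        have hψconv : ConvexOn ℝ (Metric.ball ξ₀ ε3) (fun ξ => (fconj φ ξ).toReal) := by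
          refine ⟨convex_ball _ _, fun ζ1 h1 ζ2 h2 a b ha hb hab => ?_⟩
          have hm : a • ζ1 + b • ζ2 ∈ Metric.ball ξ₀ ε3 :=
            (convex_ball _ _) h1 h2 ha hb hab
          have ht1 : fconj φ ζ1 ≠ ⊤ := hball3 h1
          have ht2 : fconj φ ζ2 ≠ ⊤ := hball3 h2
          have htm : fconj φ (a • ζ1 + b • ζ2) ≠ ⊤ := hball3 hm
          have h4 := hψconvE ζ1 ζ2 a b ha hb hab
          obtain ⟨v1, hv1, hv1'⟩ := ereal_real ht1 (fconj_ne_bot hrep ζ1)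
          obtain ⟨v2, hv2, hv2'⟩ := ereal_real ht2 (fconj_ne_bot hrep ζ2)
          obtain ⟨vm, hvm, hvm'⟩ := ereal_real htm (fconj_ne_bot hrep _)
          rw [hv1, hv2, hvm, ← EReal.coe_mul, ← EReal.coe_mul, ← EReal.coe_add,
            EReal.coe_le_coe_iff] at h4
          show (fconj φ (a • ζ1 + b • ζ2)).toReal
            ≤ a • (fconj φ ζ1).toReal + b • (fconj φ ζ2).toReal
          rw [hv1', hv2', hvm', smul_eq_mul, smul_eq_mul]
          exact h4
        have hcont := hψconv.continuousOn Metric.isOpen_ball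
        obtain ⟨ζmax, -, hζ⟩ := (isCompact_closedBall ξ₀ (2 * ε)).exists_isMaxOn
          ⟨ξ₀, by simp [hε.le]⟩ (hcont.mono hsub2)
        set C := (fconj φ ζmax).toReal with hCdef
        set N := ⌈1 / ε⌉₊ with hN
        obtain ⟨B, hB⟩ : ∃ B : ℝ, ∀ j < N, ‖Y j‖ ≤ B := by
          rcases Nat.eq_zero_or_pos N with h | h
          · exact ⟨0, fun j hj => absurd hj (by omega)⟩
          · have hne : ((Finset.range N).image fun j => ‖Y j‖).Nonempty :=
              Finset.Nonempty.image (Finset.nonempty_range_iff.mpr h.ne') _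
            exact ⟨((Finset.range N).image fun j => ‖Y j‖).max' hne,
              fun j hj => Finset.le_max' _ _
                (Finset.mem_image_of_mem (fun j => ‖Y j‖) (Finset.mem_range.mpr hj))⟩
        obtain ⟨k, hk⟩ := hbdd (max B (max 0 ((C + p 0 + 1) / ε)))
        have hkN : N ≤ k := by
          by_contra hcontra
          push_neg at hcontra
          have := hB k hcontra
          have h5 := lt_of_le_of_lt (le_max_left B _) hk
          linarith
        have hYk0 : 0 < ‖Y k‖ :=
          lt_of_le_of_lt (le_trans (le_max_left 0 _) (le_max_right B _)) hk
        have hkC : (C + p 0 + 1) / ε < ‖Y k‖ :=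
          lt_of_le_of_lt (le_trans (le_max_right 0 _) (le_max_right B _)) hk
        have hknear : ‖φ' (Y k) - ξ₀‖ < ε := by
          have h6 := hY1 k
          have h7 : (1 : ℝ) / ε ≤ (k : ℝ) := le_trans (Nat.le_ceil _) (by exact_mod_cast hkN)
          have h8 : 1 / ((k : ℝ) + 1) < ε := by
            rw [div_lt_iff₀ (by positivity)]
            have h9 : (1 : ℝ) ≤ ε * (k : ℝ) := by
              have h9a := mul_le_mul_of_nonneg_left h7 hε.le
              rw [mul_one_div, div_self hε.ne'] at h9a
              linarith [h9a]
            nlinarith [h9, hε]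
          linarith
        set u : Eucl n := ‖Y k‖⁻¹ • Y k with hu
        have hunorm : ‖u‖ = 1 := by
          rw [hu, norm_smul, norm_inv, norm_norm, inv_mul_cancel₀ hYk0.ne']
        set η : Eucl n := φ' (Y k) + ε • u with hη
        have hηball : η ∈ Metric.closedBall ξ₀ (2 * ε) := by
          rw [Metric.mem_closedBall]
          calc dist η ξ₀ ≤ dist η (φ' (Y k)) + dist (φ' (Y k)) ξ₀ := dist_triangle _ _ _
          _ ≤ ε + ε := by
              refine add_le_add ?_ ?_
              · rw [hη, dist_self_add_left, norm_smul, hunorm, mul_one,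
                  Real.norm_eq_abs, abs_of_pos hε]
              · rw [dist_eq_norm]
                exact hknear.le
          _ = 2 * ε := by ring
        have hηt : fconj φ η ≠ ⊤ := hball3 (hsub2 hηball)
        have hψη : (fconj φ η).toReal ≤ C := hζ hηball
        have hfg : ⟪Y k, η⟫ - p (Y k) ≤ (fconj φ η).toReal :=
          fconj_toReal_ge hrep (Y k) hηt
        have hinη : ⟪Y k, η⟫ = ⟪Y k, φ' (Y k)⟫ + ε * ‖Y k‖ := by
          rw [hη, inner_add_right, real_inner_smul_right, hu, real_inner_smul_right,
            real_inner_self_eq_norm_sq]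
          field_simp
        have hψξk : (fconj φ (φ' (Y k))).toReal = ⟪Y k, φ' (Y k)⟫ - p (Y k) :=
          fconj_fiber_toReal hconv hgrad hrep rfl
        have hξkt : fconj φ (φ' (Y k)) ≠ ⊤ := fconj_fiber_dom hconv hgrad hrep rfl
        have hψξklb : -(p 0) ≤ (fconj φ (φ' (Y k))).toReal := by
          have h10 := fconj_toReal_ge hrep 0 hξkt
          rwa [inner_zero_left, zero_sub] at h10
        have hmul : ε * ((C + p 0 + 1) / ε) = C + p 0 + 1 := by
          field_simp
        have h11 := mul_lt_mul_of_pos_left hkC hε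
        rw [hmul] at h11
        linarith [hfg, hinη, hψξk, hψξklb, hψη, h11]
      · -- g coercive
        obtain ⟨R, hR⟩ := hcoer (r + 1)
        obtain ⟨k, hk⟩ := hbdd R
        have h1 := hR (Y k) hk.le
        have h2 := lt_of_le_of_lt h1 (hY2 k)
        rw [EReal.coe_lt_coe_iff] at h2
        linarith
      · -- φ one-coercive
        obtain ⟨R, hR⟩ := h1c (‖ξ₀‖ + 3)
        obtain ⟨k, hk⟩ := hbdd (max R (max (p 0) 0))
        have hk1 : R ≤ ‖Y k‖ := le_trans (le_max_left _ _) hk.le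
        have hp1 := hR (Y k) hk1
        rw [hrep, EReal.coe_le_coe_iff] at hp1
        have hgm := grad_mono hconv (hgrad (Y k)) 0
        have hiy : ⟪φ' (Y k), (0 : Eucl n) - Y k⟫ = -⟪φ' (Y k), Y k⟫ := by
          rw [zero_sub, inner_neg_right]
        rw [hiy] at hgm
        have hCS : ⟪φ' (Y k), Y k⟫ ≤ ‖φ' (Y k)‖ * ‖Y k‖ := real_inner_le_norm _ _
        have hnb : ‖φ' (Y k)‖ ≤ ‖ξ₀‖ + 1 := by
          have h15 := hY1 k
          have h16 := norm_sub_norm_le (φ' (Y k)) ξ₀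
          have h17 : 1 / ((k : ℝ) + 1) ≤ 1 := by
            rw [div_le_one (by positivity)]
            linarith [(Nat.cast_nonneg k : (0:ℝ) ≤ (k : ℝ))]
          linarith
        have h17 : ‖φ' (Y k)‖ * ‖Y k‖ ≤ (‖ξ₀‖ + 1) * ‖Y k‖ :=
          mul_le_mul_of_nonneg_right hnb (norm_nonneg _)
        have hk2 : p 0 ≤ ‖Y k‖ :=
          le_trans (le_trans (le_max_left _ _) (le_max_right R _)) hk.le
        have hk3 : 0 < ‖Y k‖ :=
          lt_of_le_of_lt (le_trans (le_max_right _ _) (le_max_right R _)) hk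
        nlinarith [hp1, hgm, hCS, h17, hk2, hk3]

end BregmanPaper
end
end
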